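/- arXiv:2406.02758 — 5 statements merged into one kernel-verified Lean document; each statement's English description precedes it below -/
import Mathlib

section
/- Let a ≥ 0 and let f : B → X be holomorphic with f(0) = 0; set A = f'(0) (the Fréchet derivative at 0). The following are equivalent: (i) Re⟨f(x), x*⟩ ≥ a‖x‖² for all x ∈ B and all x* ∈ J(x) (i.e., f ∈ N_a); (ii) for every x ∈ B and every x* ∈ J(x), |⟨f(x), x*⟩ − c(x)| ≤ r(x), where c(x) = (⟨Ax, x*⟩ + ‖x‖²·conj(⟨Ax, x*⟩) − 2a‖x‖⁴)/(1 − ‖x‖²) and r(x) = (2‖x‖/(1 − ‖x‖²))·(Re⟨Ax, x*⟩ − a‖x‖²); (iii) for every x ∈ B and every x* ∈ J(x), Re⟨Ax, x*⟩·(1 − ‖x‖)/(1 + ‖x‖) + 2a‖x‖³/(1 + ‖x‖) ≤ Re⟨f(x), x*⟩. -/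
open Complex Metric

/-- The set `J(x)` of support functionals at `x`:
`{x* ∈ X* : ⟨x, x*⟩ = ‖x‖² = ‖x*‖²}`. -/
def suppFun {X : Type*} [NormedAddCommGroup X] [NormedSpace ℂ X] (x : X) :
    Set (X →L[ℂ] ℂ) :=
  {φ | φ x = (‖x‖ : ℂ) ^ 2 ∧ ‖φ‖ = ‖x‖}

/-- The class `N_a`: holomorphic mappings `f` of the open unit ball with `f(0)=0` and
`Re⟨f(x), x*⟩ ≥ a‖x‖²` for all `x ∈ B`, `x* ∈ J(x)`. -/
def IsNa {X : Type*} [NormedAddCommGroup X] [NormedSpace ℂ X] (a : ℝ) (f : X → X) : Prop :=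
  DifferentiableOn ℂ f (ball 0 1) ∧ f 0 = 0 ∧
    ∀ x ∈ ball (0 : X) 1, ∀ φ ∈ suppFun x, a * ‖x‖ ^ 2 ≤ (φ (f x)).re

/-- `K_A(θ) = sup { Re (e^{-iθ} w) : w ∈ V(A) }`, the support function of the
numerical range `V(A) = {⟨Ax, x*⟩ : ‖x‖ = 1, x* ∈ J(x)}`. -/
noncomputable def KA {X : Type*} [NormedAddCommGroup X] [NormedSpace ℂ X]
    (A : X →L[ℂ] X) (θ : ℝ) : ℝ :=
  sSup {s : ℝ | ∃ x : X, ‖x‖ = 1 ∧ ∃ φ ∈ suppFun x,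
    s = (Complex.exp (-(θ : ℂ) * Complex.I) * φ (A x)).re}


/-- Apollonius disc lemma. -/
lemma apollonius (w p0 : ℂ) (t a : ℝ) (ht0 : 0 ≤ t) (ht1 : t < 1) (hp : a ≤ p0.re)
    (h : ‖(w - p0)‖ ≤ t * ‖(w + (starRingEnd ℂ) p0 - 2*a)‖) :
    ‖(w - (p0 + (t:ℂ)^2 * (starRingEnd ℂ) p0 - ((2*a*t^2 : ℝ):ℂ))/(1-(t:ℂ)^2))‖ ≤
      2*t/(1-t^2)*(p0.re - a) := by
  have hd : (0:ℝ) < 1 - t^2 := by nlinarith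
  have hdc : (1 - (t:ℂ)^2) ≠ 0 := by
    have : ((1 - t^2 : ℝ):ℂ) ≠ 0 := by exact_mod_cast hd.ne'
    push_cast at this; exact this
  rw [show w - (p0 + (t:ℂ)^2 * (starRingEnd ℂ) p0 - ((2*a*t^2 : ℝ):ℂ))/(1-(t:ℂ)^2)
      = (((1-t^2:ℝ):ℂ) * w - (p0 + (t:ℂ)^2 * (starRingEnd ℂ) p0 - ((2*a*t^2 : ℝ):ℂ)))/((1-t^2:ℝ):ℂ)
      from by push_cast; field_simp]
  rw [norm_div, Complex.norm_real, Real.norm_eq_abs, abs_of_pos hd, div_le_iff₀ hd]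
  have hr : (2*t/(1-t^2)*(p0.re - a)) * (1 - t^2) = 2*t*(p0.re - a) := by field_simp
  rw [hr]
  have h1 : (‖(w - p0)‖)^2 ≤ (t * ‖(w + (starRingEnd ℂ) p0 - 2*a)‖)^2 :=
    pow_le_pow_left₀ (norm_nonneg _) h 2
  rw [mul_pow, Complex.sq_norm, Complex.sq_norm, Complex.normSq_apply, Complex.normSq_apply] at h1
  have key : (‖(((1-t^2:ℝ):ℂ) * w - (p0 + (t:ℂ)^2 * (starRingEnd ℂ) p0 - ((2*a*t^2 : ℝ):ℂ)))‖)^2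
      ≤ (2*t*(p0.re - a))^2 := by
    rw [Complex.sq_norm, Complex.normSq_apply]
    simp only [pow_two, Complex.sub_re, Complex.sub_im, Complex.add_re, Complex.add_im,
      Complex.mul_re, Complex.mul_im, Complex.ofReal_re, Complex.ofReal_im, Complex.conj_re,
      Complex.conj_im, Complex.one_re, Complex.one_im, Complex.re_ofNat, Complex.im_ofNat] at h1 ⊢
    ring_nf at h1 ⊢
    nlinarith [mul_nonneg hd.le (sub_nonneg.2 h1), sq_nonneg (w.im - p0.im), sq_nonneg t,
      mul_nonneg ht0 (sub_nonneg.2 hp)]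
  exact (pow_le_pow_iff_left₀ (norm_nonneg _) (mul_nonneg (by positivity) (sub_nonneg.2 hp)) two_ne_zero).mp key


lemma schwarz_re (a : ℝ) {p : ℂ → ℂ} (hp : DifferentiableOn ℂ p (ball 0 1))
    (hre : ∀ z ∈ ball (0:ℂ) 1, a ≤ (p z).re) {z : ℂ} (hz : z ∈ ball (0:ℂ) 1) :
    ‖(p z - p 0)‖ ≤
      ‖z‖ * ‖(p z + (starRingEnd ℂ) (p 0) - 2*a)‖ := by
  have key : ∀ ε : ℝ, 0 < ε → ‖(p z - p 0)‖ ≤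
      ‖z‖ * ‖(p z + (starRingEnd ℂ) (p 0) - 2*a + 2*ε)‖ := by
    intro ε hε
    set c : ℂ := (starRingEnd ℂ) (p 0) - 2*a + 2*ε with hc
    have hcre : c.re = (p 0).re - 2*a + 2*ε := by simp [hc]
    have hDre : ∀ ζ ∈ ball (0:ℂ) 1, 0 < (p ζ + c).re := by
      intro ζ hζ
      have h1 := hre ζ hζ
      have h2 := hre 0 (mem_ball_self one_pos)
      simp only [Complex.add_re, hcre]
      linarith
    have hD0 : ∀ ζ ∈ ball (0:ℂ) 1, p ζ + c ≠ 0 := by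
      intro ζ hζ h0
      have := hDre ζ hζ; rw [h0] at this; simp at this
    set ω : ℂ → ℂ := fun ζ => (p ζ - p 0) / (p ζ + c) with hω
    have hωd : DifferentiableOn ℂ ω (ball 0 1) :=
      ((hp.sub_const (p 0)).div (hp.add_const c) hD0)
    have hmaps : Set.MapsTo ω (ball 0 1) (ball 0 1) := by
      intro ζ hζ
      rw [mem_ball_zero_iff]
      have habs : ‖(p ζ - p 0)‖ < ‖(p ζ + c)‖ := by
        have hsq : (‖(p ζ - p 0)‖)^2 < (‖(p ζ + c)‖)^2 := by
          rw [Complex.sq_norm, Complex.sq_norm, Complex.normSq_apply, Complex.normSq_apply]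
          have h1 := hre ζ hζ
          have h2 := hre 0 (mem_ball_self one_pos)
          simp only [Complex.sub_re, Complex.sub_im, Complex.add_re, Complex.add_im, hcre,
            hc, Complex.conj_re, Complex.conj_im, Complex.mul_re, Complex.mul_im,
            Complex.ofReal_re, Complex.ofReal_im, Complex.re_ofNat, Complex.im_ofNat]
          ring_nf
          nlinarith [mul_pos (show (0:ℝ) < (p 0).re + ε - a by linarith)
            (show (0:ℝ) < (p ζ).re + ε - a by linarith)]
        have h0 : 0 ≤ ‖(p ζ + c)‖ := norm_nonneg _
        nlinarith [norm_nonneg (p ζ - p 0)]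
      show ‖(p ζ - p 0) / (p ζ + c)‖ < 1
      rw [norm_div]
      rw [div_lt_one (by simpa using (norm_pos_iff.mpr (hD0 ζ hζ)))]
      simpa using habs
    have hω0 : ω 0 = 0 := by simp [hω]
    have := Complex.norm_le_norm_of_mapsTo_ball hωd (hmaps.mono_right ball_subset_closedBall) hω0
      (show ‖z‖ < 1 by simpa using mem_ball_zero_iff.mp hz)
    rw [hω] at this
    have hDz := hD0 z hz
    rw [norm_div, div_le_iff₀ (norm_pos_iff.mpr hDz)] at this
    calc ‖(p z - p 0)‖ ≤ ‖z‖ * ‖(p z + c)‖ := this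
      _ = _ := by rw [hc]; ring_nf
  have htend : Filter.Tendsto (fun ε : ℝ => ‖z‖ *
      ‖(p z + (starRingEnd ℂ) (p 0) - 2*a + 2*ε)‖) (nhdsWithin 0 (Set.Ioi 0))
      (nhds (‖z‖ * ‖(p z + (starRingEnd ℂ) (p 0) - 2*a)‖)) := by
    have hcont : Continuous (fun ε : ℝ => ‖z‖ *
        ‖(p z + (starRingEnd ℂ) (p 0) - 2*a + 2*ε)‖) := by
      apply Continuous.mul continuous_const
      apply continuous_norm.comp
      continuity
    have := (hcont.tendsto 0).mono_left (nhdsWithin_le_nhds (s := Set.Ioi (0:ℝ)))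
    simpa using this
  exact ge_of_tendsto htend (by
    filter_upwards [self_mem_nhdsWithin] with ε hε
    exact key ε hε)


lemma meanvalue {p : ℂ → ℂ} (hp : DifferentiableOn ℂ p (ball 0 1)) {m t : ℝ}
    (ht0 : 0 < t) (ht1 : t < 1)
    (hb : ∀ z : ℂ, ‖z‖ = t → m ≤ (p z).re) : m ≤ (p 0).re := by
  have hsub : closedBall (0:ℂ) t ⊆ ball 0 1 := closedBall_subset_ball ht1
  have hcont : ContinuousOn p (closedBall (0:ℂ) t) := (hp.continuousOn).mono hsub
  have hdiff : ∀ z ∈ ball (0:ℂ) t \ (∅ : Set ℂ), DifferentiableAt ℂ p z := by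
    intro z hz
    exact hp.differentiableAt (isOpen_ball.mem_nhds (ball_subset_ball ht1.le hz.1))
  have hC := Complex.circleIntegral_sub_center_inv_smul_of_differentiable_on_off_countable
    ht0 Set.countable_empty hcont hdiff
  rw [circleIntegral] at hC
  simp only [deriv_circleMap, smul_eq_mul, sub_zero] at hC
  have hmem : ∀ θ : ℝ, circleMap 0 t θ ∈ closedBall (0:ℂ) t := by
    intro θ
    simp [mem_closedBall_zero_iff, norm_circleMap_zero, abs_of_pos ht0]
  have hpc : Continuous fun θ : ℝ => p (circleMap 0 t θ) :=
    hcont.comp_continuous (continuous_circleMap 0 t) hmem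
  have hint : (∫ θ in (0:ℝ)..2 * Real.pi, circleMap 0 t θ * I *
      ((circleMap 0 t θ)⁻¹ * p (circleMap 0 t θ))) =
      I * ∫ θ in (0:ℝ)..2 * Real.pi, p (circleMap 0 t θ) := by
    rw [← intervalIntegral.integral_const_mul]
    apply intervalIntegral.integral_congr
    intro θ _
    have h0 : circleMap 0 t θ ≠ 0 := circleMap_ne_center ht0.ne'
    field_simp
  rw [hint] at hC
  have hI : (I : ℂ) ≠ 0 := I_ne_zero
  have hC2 : (∫ θ in (0:ℝ)..2 * Real.pi, p (circleMap 0 t θ)) = 2 * Real.pi * p 0 := by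
    apply mul_left_cancel₀ hI
    rw [hC]; ring
  have hre : (∫ θ in (0:ℝ)..2 * Real.pi, (p (circleMap 0 t θ)).re) = 2 * Real.pi * (p 0).re := by
    have := Complex.reCLM.intervalIntegral_comp_comm
      (hpc.intervalIntegrable (0:ℝ) (2 * Real.pi)) (μ := MeasureTheory.volume)
    rw [hC2] at this
    simpa using this
  have hmono : m * (2 * Real.pi) ≤ 2 * Real.pi * (p 0).re := by
    rw [← hre]
    have : m * (2 * Real.pi) = ∫ _ in (0:ℝ)..2 * Real.pi, m := by
      simp [mul_comm]
    rw [this]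
    apply intervalIntegral.integral_mono_on (by positivity)
      (intervalIntegrable_const) ((Complex.continuous_re.comp hpc).intervalIntegrable _ _)
    intro θ _
    exact hb _ (by simpa [abs_of_pos ht0] using norm_circleMap_zero t θ)
  nlinarith [Real.pi_pos]


lemma reduce {X : Type*} [NormedAddCommGroup X] [NormedSpace ℂ X]
    (f : X → X) (hf : DifferentiableOn ℂ f (ball 0 1)) (hf0 : f 0 = 0)
    (A : X →L[ℂ] X) (hA : A = fderiv ℂ f 0) (x : X) (hx : x ∈ ball (0:X) 1) (hx0 : x ≠ 0)
    (φ : X →L[ℂ] ℂ) (hφ : φ ∈ suppFun x) :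
    ∃ p : ℂ → ℂ, DifferentiableOn ℂ p (ball 0 1) ∧
      φ (A x) = (‖x‖ : ℂ)^2 * p 0 ∧
      φ (f x) = (‖x‖ : ℂ)^2 * p ((‖x‖ : ℝ) : ℂ) ∧
      (∀ ζ : ℂ, ζ ∈ ball (0:ℂ) 1 → ζ ≠ 0 →
        ∃ y : X, ∃ φ' : X →L[ℂ] ℂ, y ∈ ball (0:X) 1 ∧ φ' ∈ suppFun y ∧
          ‖y‖ = ‖ζ‖ ∧
          φ' (f y) = (Complex.normSq ζ : ℂ) * p ζ ∧
          φ' (A y) = (Complex.normSq ζ : ℂ) * p 0) := by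
  obtain ⟨hφx, hφn⟩ := hφ
  set s : ℝ := ‖x‖ with hs
  have hs0 : 0 < s := norm_pos_iff.mpr hx0
  have hs1 : s < 1 := by simpa [hs] using mem_ball_zero_iff.mp hx
  have hsc : ((s:ℝ):ℂ) ≠ 0 := by exact_mod_cast hs0.ne'
  set u : X := ((s:ℂ))⁻¹ • x with hu
  have hun : ‖u‖ = 1 := by
    rw [hu, norm_smul]
    simp only [norm_inv, Complex.norm_real, Real.norm_eq_abs, abs_of_pos hs0, ← hs]
    exact inv_mul_cancel₀ hs0.ne'
  set ψ : X →L[ℂ] ℂ := ((s:ℂ))⁻¹ • φ with hψ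
  have hψn : ‖ψ‖ = 1 := by
    have h1 : ‖ψ‖ = ‖((s:ℂ))⁻¹‖ * ‖φ‖ := by rw [hψ]; exact norm_smul (((s:ℝ):ℂ))⁻¹ φ
    rw [h1, hφn]
    simp only [norm_inv, Complex.norm_real, Real.norm_eq_abs, abs_of_pos hs0]
    exact inv_mul_cancel₀ hs0.ne'
  have hψu : ψ u = 1 := by
    rw [hψ, hu]
    simp only [ContinuousLinearMap.smul_apply, map_smul, smul_eq_mul]
    rw [hφx]
    field_simp
  -- the map ζ ↦ ζ • u stays in the ball
  have hmem : ∀ ζ : ℂ, ζ ∈ ball (0:ℂ) 1 → ζ • u ∈ ball (0:X) 1 := by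
    intro ζ hζ
    rw [mem_ball_zero_iff, norm_smul, hun, mul_one]
    exact mem_ball_zero_iff.mp hζ
  set g : ℂ → ℂ := fun ζ => ψ (f (ζ • u)) with hg
  have hgd : DifferentiableOn ℂ g (ball 0 1) := by
    apply (ψ.differentiable.comp_differentiableOn)
    exact hf.comp ((differentiable_id.smul_const u).differentiableOn) hmem
  have hg0 : g 0 = 0 := by simp [hg, hf0]
  set p : ℂ → ℂ := dslope g 0 with hp
  have hpd : DifferentiableOn ℂ p (ball 0 1) :=
    (differentiableOn_dslope (ball_mem_nhds (0:ℂ) one_pos)).mpr hgd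
  have hpne : ∀ ζ : ℂ, ζ ≠ 0 → p ζ = g ζ / ζ := by
    intro ζ hζ
    rw [hp, dslope_of_ne _ hζ, slope_def_field, hg0]
    simp
  -- p 0 = ψ (A u)
  have hp0 : p 0 = ψ (A u) := by
    have hfd : DifferentiableAt ℂ f 0 := hf.differentiableAt (isOpen_ball.mem_nhds
      (mem_ball_self one_pos))
    have h1 : HasDerivAt (fun ζ : ℂ => ζ • u) u 0 := by
      simpa using (hasDerivAt_id (0:ℂ)).smul_const u
    have h2 : HasDerivAt (fun ζ : ℂ => f (ζ • u)) (A u) 0 := by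
      have hF : HasFDerivAt f A ((0:ℂ) • u) := by
        rw [zero_smul]; exact hA ▸ hfd.hasFDerivAt
      exact (hF.comp_hasDerivAt (0:ℂ) h1)
    have h3 : HasDerivAt g (ψ (A u)) 0 := by
      exact (ψ.hasFDerivAt.comp_hasDerivAt 0 h2)
    rw [hp, dslope_same]
    exact h3.deriv
  refine ⟨p, hpd, ?_, ?_, ?_⟩
  · -- φ (A x) = s² p 0
    rw [hp0, hψ, hu]
    simp only [ContinuousLinearMap.smul_apply, map_smul, smul_eq_mul]
    field_simp
  · -- φ (f x) = s² p s
    have hsx : ((s:ℂ)) • u = x := by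
      rw [hu, smul_smul, mul_inv_cancel₀ hsc, one_smul]
    have hsball : ((s:ℂ)) ∈ ball (0:ℂ) 1 := by
      rw [mem_ball_zero_iff, Complex.norm_real, Real.norm_eq_abs, abs_of_pos hs0]
      exact hs1
    rw [hpne _ hsc]
    simp only [hg]
    rw [hsx, hψ]
    simp only [ContinuousLinearMap.smul_apply, smul_eq_mul]
    field_simp
  · intro ζ hζ hζ0
    refine ⟨ζ • u, (starRingEnd ℂ ζ) • ψ, hmem ζ hζ, ⟨?_, ?_⟩, ?_, ?_, ?_⟩
    · simp only [ContinuousLinearMap.smul_apply, map_smul, smul_eq_mul, hψu, mul_one]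
      rw [norm_smul, hun, mul_one]
      rw [show (((‖ζ‖ : ℝ)) : ℂ)^2 = (Complex.normSq ζ : ℂ) by
        rw [← Complex.ofReal_pow, Complex.sq_norm]]
      rw [← Complex.mul_conj]
    · have hl : ‖(starRingEnd ℂ ζ) • ψ‖ = ‖(starRingEnd ℂ) ζ‖ * ‖ψ‖ :=
        norm_smul ((starRingEnd ℂ) ζ) ψ
      rw [hl, hψn, mul_one, norm_smul, hun, mul_one]
      simp
    · rw [norm_smul, hun, mul_one]
    · simp only [ContinuousLinearMap.smul_apply, smul_eq_mul]
      rw [show ψ (f (ζ • u)) = g ζ from rfl, hpne _ hζ0]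
      rw [mul_div_assoc']
      rw [eq_div_iff hζ0]
      push_cast [← Complex.normSq_eq_norm_sq]
      rw [← Complex.mul_conj]
      ring
    · have h1 : A (ζ • u) = ζ • A u := map_smul A ζ u
      simp only [ContinuousLinearMap.smul_apply, smul_eq_mul, h1, map_smul, hp0]
      rw [show ((Complex.normSq ζ : ℝ) : ℂ) = ζ * (starRingEnd ℂ ζ) by
        rw [Complex.mul_conj]]
      ring


lemma point_main (a s : ℝ) (hs0 : 0 ≤ s) (hs1 : s < 1) (w v : ℂ)
    (h : ‖(w - (v + (s:ℂ)^2 * (starRingEnd ℂ) v - ((2*a*s^4 : ℝ):ℂ))/(1-(s:ℂ)^2))‖ ≤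
      2*s/(1-s^2)*(v.re - a*s^2)) :
    v.re * ((1-s)/(1+s)) + 2*a*s^3/(1+s) ≤ w.re ∧ (0 < s → a * s^2 ≤ w.re) := by
  have hd : (0:ℝ) < 1 - s^2 := by nlinarith
  have hd1 : (0:ℝ) < 1 + s := by linarith
  set N : ℂ := v + (s:ℂ)^2 * (starRingEnd ℂ) v - ((2*a*s^4 : ℝ):ℂ) with hN
  have hden : (1-(s:ℂ)^2) = ((1-s^2 : ℝ):ℂ) := by push_cast; ring
  have hcre : (N / (1-(s:ℂ)^2)).re = (v.re*(1+s^2) - 2*a*s^4)/(1-s^2) := by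
    rw [hden, Complex.div_ofReal_re, hN]
    simp only [Complex.sub_re, Complex.add_re, Complex.mul_re, Complex.ofReal_re,
      Complex.ofReal_im, Complex.conj_re, Complex.conj_im, ← Complex.ofReal_pow]
    push_cast
    ring_nf
  have habs : -(2*s/(1-s^2)*(v.re - a*s^2)) ≤ (w - N / (1-(s:ℂ)^2)).re := by
    have h1 : |(w - N / (1-(s:ℂ)^2)).re| ≤ ‖(w - N / (1-(s:ℂ)^2))‖ :=
      Complex.abs_re_le_norm _
    have h2 := (abs_le.mp (le_trans h1 h)).1
    linarith
  have hwre : (v.re*(1+s^2) - 2*a*s^4)/(1-s^2) - 2*s/(1-s^2)*(v.re - a*s^2) ≤ w.re := by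
    have : (w - N / (1-(s:ℂ)^2)).re = w.re - (N / (1-(s:ℂ)^2)).re := by simp
    rw [this, hcre] at habs
    linarith
  constructor
  · have heq : (v.re*(1+s^2) - 2*a*s^4)/(1-s^2) - 2*s/(1-s^2)*(v.re - a*s^2)
        = v.re * ((1-s)/(1+s)) + 2*a*s^3/(1+s) := by
      field_simp
      ring
    linarith [heq ▸ hwre]
  · intro hs
    have hnn : 0 ≤ 2*s/(1-s^2)*(v.re - a*s^2) := le_trans (norm_nonneg _) h
    have hv : a*s^2 ≤ v.re := by
      by_contra hc
      push_neg at hc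
      have : 2*s/(1-s^2)*(v.re - a*s^2) < 0 :=
        mul_neg_of_pos_of_neg (by positivity) (by linarith)
      linarith
    have : a*s^2*(1+s) ≤ v.re*(1-s) + 2*a*s^3 := by nlinarith
    have h2 : (v.re*(1+s^2) - 2*a*s^4)/(1-s^2) - 2*s/(1-s^2)*(v.re - a*s^2)
        = (v.re*(1-s) + 2*a*s^3)/(1+s) := by field_simp; ring
    rw [h2] at hwre
    have : a*s^2 ≤ (v.re*(1-s) + 2*a*s^3)/(1+s) := by
      rw [le_div_iff₀ hd1]; nlinarith
    linarith


/-- Proposition 2.4 (equivalence of (i), (ii), (iii)). -/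
theorem stmt_0 {X : Type*} [NormedAddCommGroup X] [NormedSpace ℂ X]
    (a : ℝ) (ha : 0 ≤ a) (f : X → X)
    (hf : DifferentiableOn ℂ f (ball 0 1)) (hf0 : f 0 = 0)
    (A : X →L[ℂ] X) (hA : A = fderiv ℂ f 0) :
    ((∀ x ∈ ball (0 : X) 1, ∀ φ ∈ suppFun x, a * ‖x‖ ^ 2 ≤ (φ (f x)).re) ↔
      (∀ x ∈ ball (0 : X) 1, ∀ φ ∈ suppFun x,
        ‖(φ (f x) -
            (φ (A x) + (‖x‖ : ℂ) ^ 2 * (starRingEnd ℂ) (φ (A x)) -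
              ((2 * a * ‖x‖ ^ 4 : ℝ) : ℂ)) / (1 - (‖x‖ : ℂ) ^ 2))‖ ≤
          2 * ‖x‖ / (1 - ‖x‖ ^ 2) * ((φ (A x)).re - a * ‖x‖ ^ 2)))
    ∧
    ((∀ x ∈ ball (0 : X) 1, ∀ φ ∈ suppFun x, a * ‖x‖ ^ 2 ≤ (φ (f x)).re) ↔
      (∀ x ∈ ball (0 : X) 1, ∀ φ ∈ suppFun x,
        (φ (A x)).re * ((1 - ‖x‖) / (1 + ‖x‖)) + 2 * a * ‖x‖ ^ 3 / (1 + ‖x‖) ≤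
          (φ (f x)).re)) := by
  -- (i) → (ii)
  have fwd2 : (∀ x ∈ ball (0 : X) 1, ∀ φ ∈ suppFun x, a * ‖x‖ ^ 2 ≤ (φ (f x)).re) →
      (∀ x ∈ ball (0 : X) 1, ∀ φ ∈ suppFun x,
        ‖(φ (f x) -
            (φ (A x) + (‖x‖ : ℂ) ^ 2 * (starRingEnd ℂ) (φ (A x)) -
              ((2 * a * ‖x‖ ^ 4 : ℝ) : ℂ)) / (1 - (‖x‖ : ℂ) ^ 2))‖ ≤
          2 * ‖x‖ / (1 - ‖x‖ ^ 2) * ((φ (A x)).re - a * ‖x‖ ^ 2)) := by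
    intro hi x hx φ hφ
    by_cases hx0 : x = 0
    · subst hx0
      simp [hf0]
    obtain ⟨p, hpd, hAx, hfx, hgen⟩ := reduce f hf hf0 A hA x hx hx0 φ hφ
    set s : ℝ := ‖x‖ with hs
    have hs0 : 0 < s := norm_pos_iff.mpr hx0
    have hs1 : s < 1 := by simpa [hs] using mem_ball_zero_iff.mp hx
    have hrep : ∀ ζ ∈ ball (0:ℂ) 1, a ≤ (p ζ).re := by
      intro ζ hζ
      by_cases hζ0 : ζ = 0
      · subst hζ0
        have hc : ContinuousAt p 0 :=
          (hpd.differentiableAt (isOpen_ball.mem_nhds (mem_ball_self one_pos))).continuousAt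
        have htend : Filter.Tendsto (fun ζ => (p ζ).re) (nhdsWithin 0 {(0:ℂ)}ᶜ)
            (nhds ((p 0).re)) :=
          (Complex.continuous_re.continuousAt.tendsto.comp
            (hc.tendsto.mono_left nhdsWithin_le_nhds))
        refine ge_of_tendsto htend ?_
        have hball : ∀ᶠ ζ in nhdsWithin (0:ℂ) {(0:ℂ)}ᶜ, ζ ∈ ball (0:ℂ) 1 :=
          Filter.eventually_iff_exists_mem.mpr ⟨_, inter_mem_nhdsWithin _
            (isOpen_ball.mem_nhds (mem_ball_self one_pos)), fun y hy => hy.2⟩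
        filter_upwards [hball, self_mem_nhdsWithin] with ζ hζb hζn
        obtain ⟨y, φ', hy, hφ', hyn, hfy, hAy⟩ := hgen ζ hζb hζn
        have hthis := hi y hy φ' hφ'
        rw [hfy, Complex.re_ofReal_mul] at hthis
        have hns : 0 < Complex.normSq ζ := Complex.normSq_pos.mpr (by simpa using hζn)
        have hsq : ‖y‖^2 = Complex.normSq ζ := by rw [hyn, Complex.sq_norm]
        rw [hsq] at hthis
        nlinarith
      · obtain ⟨y, φ', hy, hφ', hyn, hfy, hAy⟩ := hgen ζ hζ hζ0
        have hthis := hi y hy φ' hφ'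
        rw [hfy, Complex.re_ofReal_mul] at hthis
        have hns : 0 < Complex.normSq ζ := Complex.normSq_pos.mpr hζ0
        have hsq : ‖y‖^2 = Complex.normSq ζ := by rw [hyn, Complex.sq_norm]
        rw [hsq] at hthis
        nlinarith
    have hp0re : a ≤ (p 0).re := hrep 0 (mem_ball_self one_pos)
    have hsball : ((s:ℝ):ℂ) ∈ ball (0:ℂ) 1 := by
      rw [mem_ball_zero_iff, Complex.norm_real, Real.norm_eq_abs, abs_of_pos hs0]
      exact hs1
    have hschwarz := schwarz_re a hpd hrep hsball
    rw [show ‖((s:ℝ):ℂ)‖ = s by rw [Complex.norm_real, Real.norm_eq_abs, abs_of_pos hs0]] at hschwarz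
    have hap := apollonius (p ((s:ℝ):ℂ)) (p 0) s a hs0.le hs1 hp0re hschwarz
    have hdc : (1 - ((s:ℝ):ℂ)^2) ≠ 0 := by
      have h1 : (0:ℝ) < 1 - s^2 := by nlinarith
      have : ((1 - s^2 : ℝ):ℂ) ≠ 0 := by exact_mod_cast h1.ne'
      push_cast at this; exact this
    have hkey : φ (f x) -
        (φ (A x) + ((s:ℝ):ℂ)^2 * (starRingEnd ℂ) (φ (A x)) - ((2*a*s^4 : ℝ):ℂ))/(1-((s:ℝ):ℂ)^2)
        = ((s:ℝ):ℂ)^2 * (p ((s:ℝ):ℂ) -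
            (p 0 + ((s:ℝ):ℂ)^2 * (starRingEnd ℂ) (p 0) - ((2*a*s^2 : ℝ):ℂ))/(1-((s:ℝ):ℂ)^2)) := by
      rw [hfx, hAx]
      simp only [map_mul, map_pow, Complex.conj_ofReal]
      field_simp
      push_cast
      ring
    rw [hkey, norm_mul, norm_pow, Complex.norm_real, Real.norm_eq_abs, abs_of_pos hs0]
    have hAre : (φ (A x)).re = s^2 * (p 0).re := by
      rw [hAx, show ((s:ℝ):ℂ)^2 = ((s^2:ℝ):ℂ) by push_cast; ring, Complex.re_ofReal_mul]
    rw [hAre]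
    calc s^2 * ‖(p ((s:ℝ):ℂ) -
          (p 0 + ((s:ℝ):ℂ)^2 * (starRingEnd ℂ) (p 0) - ((2*a*s^2 : ℝ):ℂ))/(1-((s:ℝ):ℂ)^2))‖
        ≤ s^2 * (2*s/(1-s^2)*((p 0).re - a)) :=
          mul_le_mul_of_nonneg_left hap (by positivity)
      _ = 2*s/(1-s^2)*(s^2*(p 0).re - a*s^2) := by ring
  -- (ii) → (i)
  have bwd2 : (∀ x ∈ ball (0 : X) 1, ∀ φ ∈ suppFun x,
        ‖(φ (f x) -
            (φ (A x) + (‖x‖ : ℂ) ^ 2 * (starRingEnd ℂ) (φ (A x)) -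
              ((2 * a * ‖x‖ ^ 4 : ℝ) : ℂ)) / (1 - (‖x‖ : ℂ) ^ 2))‖ ≤
          2 * ‖x‖ / (1 - ‖x‖ ^ 2) * ((φ (A x)).re - a * ‖x‖ ^ 2)) →
      (∀ x ∈ ball (0 : X) 1, ∀ φ ∈ suppFun x, a * ‖x‖ ^ 2 ≤ (φ (f x)).re) := by
    intro hii x hx φ hφ
    by_cases hx0 : x = 0
    · subst hx0; simp [hf0]
    have hs0 : 0 < ‖x‖ := norm_pos_iff.mpr hx0
    have hs1 : ‖x‖ < 1 := mem_ball_zero_iff.mp hx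
    exact (point_main a ‖x‖ hs0.le hs1 (φ (f x)) (φ (A x)) (hii x hx φ hφ)).2 hs0
  refine ⟨⟨fwd2, bwd2⟩, ?_, ?_⟩
  · -- (i) → (iii)
    intro hi x hx φ hφ
    have hii := fwd2 hi x hx φ hφ
    have hs1 : ‖x‖ < 1 := mem_ball_zero_iff.mp hx
    exact (point_main a ‖x‖ (norm_nonneg x) hs1 (φ (f x)) (φ (A x)) hii).1
  · -- (iii) → (i)
    intro hiii x hx φ hφ
    by_cases hx0 : x = 0
    · subst hx0; simp [hf0]
    obtain ⟨p, hpd, hAx, hfx, hgen⟩ := reduce f hf hf0 A hA x hx hx0 φ hφ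
    set s : ℝ := ‖x‖ with hs
    have hs0 : 0 < s := norm_pos_iff.mpr hx0
    have hs1 : s < 1 := by simpa [hs] using mem_ball_zero_iff.mp hx
    set α : ℝ := (p 0).re with hα
    have hαa : a ≤ α := by
      have hm : α * (1/3) + 2*a*(1/3) ≤ α := by
        apply meanvalue hpd (t := 1/2) (by norm_num) (by norm_num)
        intro ζ hζabs
        have hζ0 : ζ ≠ 0 := by
          intro h0; rw [h0] at hζabs; simp at hζabs
        have hζb : ζ ∈ ball (0:ℂ) 1 := by
          rw [mem_ball_zero_iff, hζabs]; norm_num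
        obtain ⟨y, φ', hy, hφ', hyn, hfy, hAy⟩ := hgen ζ hζb hζ0
        have h3 := hiii y hy φ' hφ'
        rw [hfy, hAy, Complex.re_ofReal_mul, Complex.re_ofReal_mul, hyn, hζabs] at h3
        have hns : Complex.normSq ζ = 1/4 := by
          rw [← Complex.sq_norm, hζabs]; norm_num
        rw [hns] at h3
        norm_num at h3
        linarith
      linarith
    have h3 := hiii x hx φ hφ
    have hAre : (φ (A x)).re = s^2 * α := by
      rw [hα, hAx, show ((s:ℝ):ℂ)^2 = ((s^2:ℝ):ℂ) by push_cast; ring, Complex.re_ofReal_mul]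
    rw [hAre] at h3
    have hd1 : (0:ℝ) < 1 + s := by linarith
    have hstep : a * s^2 ≤ s^2*α * ((1-s)/(1+s)) + 2*a*s^3/(1+s) := by
      have heq : s^2*α * ((1-s)/(1+s)) + 2*a*s^3/(1+s) = (s^2*α*(1-s) + 2*a*s^3)/(1+s) := by
        field_simp
      rw [heq, le_div_iff₀ hd1]
      nlinarith [mul_nonneg (mul_nonneg (mul_nonneg hs0.le hs0.le)
        (sub_nonneg.2 hαa)) (sub_nonneg.2 hs1.le)]
    linarith
end

section
/- Let a ≥ 0 and let f : B → X be holomorphic with f(0) = 0. Then f ∈ N_a (i.e., Re⟨f(x), x*⟩ ≥ a‖x‖² for all x ∈ B and x* ∈ J(x)) if and only if for every x ∈ B and every x* ∈ J(x), Re[ 2⟨f(x), x*⟩ + (1 − ‖x‖²)⟨f'(x)x, x*⟩ ] ≥ a‖x‖²(1 + ‖x‖²), where f'(x)x denotes the Fréchet derivative of f at x applied to the vector x. -/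
open Complex Metric

section Aux
open Set Filter Topology


lemma halfplane_deriv_bound (a : ℝ) (p : ℂ → ℂ)
    (hp : DifferentiableOn ℂ p (ball 0 1))
    (hA : ∀ z ∈ ball (0:ℂ) 1, a ≤ (p z).re) {z₀ : ℂ} (hz₀ : z₀ ∈ ball (0:ℂ) 1) :
    ‖deriv p z₀‖ * (1 - ‖z₀‖^2) ≤ 2 * ((p z₀).re - a) := by
  have hz₀1 : ‖z₀‖ < 1 := by simpa [mem_ball, dist_zero_right] using hz₀
  have hns : normSq z₀ < 1 := by
    rw [Complex.normSq_eq_norm_sq]; nlinarith [norm_nonneg z₀]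
  have key : ∀ ε : ℝ, 0 < ε →
      ‖deriv p z₀‖ * (1 - ‖z₀‖^2) ≤ 2 * ((p z₀).re - a) + ε := by
    intro ε hε
    set T : ℂ → ℂ := fun z => (z + z₀) / (1 + (starRingEnd ℂ) z₀ * z) with hT
    have hkey : ∀ z : ℂ, normSq (1 + (starRingEnd ℂ) z₀ * z) - normSq (z + z₀)
        = (1 - normSq z₀) * (1 - normSq z) := by
      intro z
      simp only [normSq_apply, add_re, add_im, mul_re, mul_im, one_re, one_im,
        conj_re, conj_im]
      ring
    have hden : ∀ z ∈ ball (0:ℂ) 1, (1 + (starRingEnd ℂ) z₀ * z) ≠ 0 := by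
      intro z hz
      have hz1 : normSq z < 1 := by
        rw [Complex.normSq_eq_norm_sq]
        have : ‖z‖ < 1 := by simpa [mem_ball, dist_zero_right] using hz
        nlinarith [norm_nonneg z]
      have h1 := hkey z
      have h2 : 0 < normSq (1 + (starRingEnd ℂ) z₀ * z) := by
        nlinarith [normSq_nonneg (z + z₀)]
      exact fun h => by simp [h] at h2
    have hTmaps : MapsTo T (ball 0 1) (ball 0 1) := by
      intro z hz
      have hz1 : normSq z < 1 := by
        rw [Complex.normSq_eq_norm_sq]
        have : ‖z‖ < 1 := by simpa [mem_ball, dist_zero_right] using hz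
        nlinarith [norm_nonneg z]
      have h1 := hkey z
      have hlt : normSq (z + z₀) < normSq (1 + (starRingEnd ℂ) z₀ * z) := by nlinarith
      have habs : ‖z + z₀‖ < ‖1 + (starRingEnd ℂ) z₀ * z‖ := by
        rw [Complex.norm_def, Complex.norm_def]
        exact Real.sqrt_lt_sqrt (normSq_nonneg _) hlt
      have hne := hden z hz
      have hpos : 0 < ‖1 + (starRingEnd ℂ) z₀ * z‖ := norm_pos_iff.mpr hne
      simp only [mem_ball, dist_zero_right, hT, norm_div]
      rw [div_lt_one hpos]
      exact habs
    have hT0 : T 0 = z₀ := by simp [hT]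
    have hTd : HasDerivAt T (1 - (normSq z₀ : ℂ)) 0 := by
      have h1 : HasDerivAt (fun z : ℂ => z + z₀) 1 0 := (hasDerivAt_id 0).add_const z₀
      have h2 : HasDerivAt (fun z : ℂ => 1 + (starRingEnd ℂ) z₀ * z) ((starRingEnd ℂ) z₀) 0 := by
        simpa using ((hasDerivAt_id 0).const_mul ((starRingEnd ℂ) z₀)).const_add 1
      have h3 := h1.div h2 (by simpa using hden 0 (by simp))
      refine h3.congr_deriv ?_
      symm
      have : z₀ * (starRingEnd ℂ) z₀ = (normSq z₀ : ℂ) := mul_conj z₀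
      field_simp
      linear_combination this
    -- the shifted function
    set c : ℂ := p z₀ - (a:ℂ) + ((ε/2 : ℝ) : ℂ) with hc
    have hcre : 0 < c.re := by
      have := hA z₀ hz₀
      simp only [hc, add_re, sub_re, ofReal_re]
      linarith
    set g : ℂ → ℂ := fun z => p (T z) - (a:ℂ) + ((ε/2 : ℝ) : ℂ) with hg
    have hgre : ∀ z ∈ ball (0:ℂ) 1, 0 < (g z).re := by
      intro z hz
      have := hA (T z) (hTmaps hz)
      simp only [hg, add_re, sub_re, ofReal_re]
      linarith
    have hgden : ∀ z ∈ ball (0:ℂ) 1, g z + (starRingEnd ℂ) c ≠ 0 := by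
      intro z hz h
      have h1 : (g z + (starRingEnd ℂ) c).re = (g z).re + c.re := by
        simp [add_re, conj_re]
      rw [h] at h1
      simp only [zero_re] at h1
      have := hgre z hz
      linarith
    set F : ℂ → ℂ := fun z => (g z - c) / (g z + (starRingEnd ℂ) c) with hF
    have hg0 : g 0 = c := by simp [hg, hT0, hc]
    have hF0 : F 0 = 0 := by simp [hF, hg0]
    have hFmaps : MapsTo F (ball 0 1) (ball (F 0) 1) := by
      rw [hF0]
      intro z hz
      have hiden : ∀ w : ℂ, normSq (w + (starRingEnd ℂ) c) - normSq (w - c)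
          = 4 * w.re * c.re := by
        intro w
        simp only [normSq_apply, add_re, add_im, sub_re, sub_im, conj_re, conj_im]
        ring
      have hwre := hgre z hz
      have hlt : normSq (g z - c) < normSq (g z + (starRingEnd ℂ) c) := by
        have := hiden (g z); nlinarith
      have habs : ‖g z - c‖ < ‖g z + (starRingEnd ℂ) c‖ := by
        rw [Complex.norm_def, Complex.norm_def]
        exact Real.sqrt_lt_sqrt (normSq_nonneg _) hlt
      have hne := hgden z hz
      have hpos : 0 < ‖g z + (starRingEnd ℂ) c‖ := norm_pos_iff.mpr hne
      simp only [mem_ball, dist_zero_right, hF, norm_div]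
      rw [div_lt_one hpos]
      exact habs
    have hTdiff : DifferentiableOn ℂ T (ball 0 1) := by
      apply DifferentiableOn.div
      · exact (differentiable_id.add_const z₀).differentiableOn
      · exact ((differentiable_id.const_mul _).const_add 1).differentiableOn
      · exact hden
    have hgdiff : DifferentiableOn ℂ g (ball 0 1) := by
      have := (hp.comp hTdiff hTmaps)
      exact (this.sub_const _).add_const _
    have hFdiff : DifferentiableOn ℂ F (ball 0 1) :=
      (hgdiff.sub_const c).div (hgdiff.add_const _) hgden
    -- derivative of F at 0
    have hpz₀ : HasDerivAt p (deriv p z₀) z₀ :=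
      (hp.differentiableAt (isOpen_ball.mem_nhds hz₀)).hasDerivAt
    set d₀ : ℂ := deriv p z₀ * (1 - (normSq z₀ : ℂ)) with hd₀
    have hgd : HasDerivAt g d₀ 0 := by
      have h1 : HasDerivAt (fun z => p (T z)) d₀ 0 := by
        have := HasDerivAt.comp (0:ℂ) (by rwa [hT0]) hTd
        exact this
      exact (h1.sub_const _).add_const _
    have hFd : HasDerivAt F (d₀ / (c + (starRingEnd ℂ) c)) 0 := by
      have h1 : HasDerivAt (fun z => g z - c) d₀ 0 := hgd.sub_const c
      have h2 : HasDerivAt (fun z => g z + (starRingEnd ℂ) c) d₀ 0 := hgd.add_const _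
      have h3 := h1.div h2 (by simpa using hgden 0 (by simp))
      have hnum : g 0 - c = 0 := by rw [hg0]; ring
      refine h3.congr_deriv ?_
      symm
      rw [hnum, hg0]
      have hne : c + (starRingEnd ℂ) c ≠ 0 := by simpa [hg0] using hgden 0 (by simp)
      field_simp
      ring
    have hschwarz : ‖deriv F 0‖ ≤ 1 / 1 :=
      Complex.norm_deriv_le_div_of_mapsTo_ball hFdiff (hFmaps.mono_right ball_subset_closedBall) one_pos
    rw [hFd.deriv] at hschwarz
    have hcc : c + (starRingEnd ℂ) c = ((2 * c.re : ℝ) : ℂ) := add_conj c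
    have hccnorm : ‖c + (starRingEnd ℂ) c‖ = 2 * c.re := by
      rw [hcc, Complex.norm_real, Real.norm_eq_abs, abs_of_pos (by linarith)]
    have h4 : ‖d₀‖ ≤ 2 * c.re := by
      rw [norm_div, hccnorm] at hschwarz
      have h2c : (0:ℝ) < 2 * c.re := by linarith
      rw [div_le_div_iff₀ h2c (by norm_num), one_mul] at hschwarz
      linarith
    have hd₀norm : ‖d₀‖ = ‖deriv p z₀‖ * (1 - ‖z₀‖^2) := by
      rw [hd₀, norm_mul]
      congr 1
      have : ((1 : ℝ) - normSq z₀ : ℂ) = (((1 - normSq z₀ : ℝ)) : ℂ) := by push_cast; ring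
      rw [show (1 : ℂ) - (normSq z₀ : ℂ) = (((1 - normSq z₀ : ℝ)) : ℂ) from this,
        Complex.norm_real, Real.norm_eq_abs, abs_of_pos (by linarith), Complex.normSq_eq_norm_sq]
    rw [hd₀norm] at h4
    have : c.re = (p z₀).re - a + ε/2 := by
      simp [hc, add_re, sub_re, ofReal_re]
    rw [this] at h4
    linarith
  by_contra hcon
  push_neg at hcon
  have := key ((‖deriv p z₀‖ * (1 - ‖z₀‖^2) - 2 * ((p z₀).re - a)) / 2) (by linarith)
  linarith


lemma condB_of_condA (a : ℝ) (ha : 0 ≤ a) (p : ℂ → ℂ)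
    (hp : DifferentiableOn ℂ p (ball 0 1))
    (hA : ∀ z ∈ ball (0:ℂ) 1, a ≤ (p z).re) {z : ℂ} (hz : z ∈ ball (0:ℂ) 1) :
    a * (1 + ‖z‖^2) ≤ ((3 - (‖z‖:ℂ)^2) * p z + (1 - (‖z‖:ℂ)^2) * (z * deriv p z)).re := by
  have hr1 : ‖z‖ < 1 := by simpa [mem_ball, dist_zero_right] using hz
  have hr0 : (0:ℝ) ≤ ‖z‖ := norm_nonneg z
  have hre : ((3 - (‖z‖:ℂ)^2) * p z + (1 - (‖z‖:ℂ)^2) * (z * deriv p z)).re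
      = (3 - ‖z‖^2) * (p z).re + (1 - ‖z‖^2) * (z * deriv p z).re := by
    have h1 : ((3:ℂ) - (‖z‖:ℂ)^2) = (((3 - ‖z‖^2 : ℝ)) : ℂ) := by push_cast; ring
    have h2 : ((1:ℂ) - (‖z‖:ℂ)^2) = (((1 - ‖z‖^2 : ℝ)) : ℂ) := by push_cast; ring
    rw [h1, h2, add_re, re_ofReal_mul, re_ofReal_mul]
  rw [hre]
  have hSP := halfplane_deriv_bound a p hp hA hz
  have hAz := hA z hz
  have hd0 : (0:ℝ) ≤ ‖deriv p z‖ := norm_nonneg _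
  have hlow : -(‖z‖ * ‖deriv p z‖) ≤ (z * deriv p z).re := by
    have h1 : |(z * deriv p z).re| ≤ ‖z * deriv p z‖ := Complex.abs_re_le_norm _
    rw [norm_mul] at h1
    cases' abs_le.mp h1 with h2 _
    linarith
  have hmul : (1 - ‖z‖^2) * (z * deriv p z).re ≥ (1 - ‖z‖^2) * (-(‖z‖ * ‖deriv p z‖)) := by
    apply mul_le_mul_of_nonneg_left hlow (by nlinarith)
  have hkey : (1 - ‖z‖^2) * (‖z‖ * ‖deriv p z‖) ≤ ‖z‖ * (2 * ((p z).re - a)) := by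
    calc (1 - ‖z‖^2) * (‖z‖ * ‖deriv p z‖) = ‖z‖ * (‖deriv p z‖ * (1 - ‖z‖^2)) := by ring
    _ ≤ ‖z‖ * (2 * ((p z).re - a)) := mul_le_mul_of_nonneg_left hSP hr0
  nlinarith [mul_nonneg (mul_nonneg (sub_nonneg.mpr hr1.le) (by linarith : (0:ℝ) ≤ 3 + ‖z‖)) (sub_nonneg.mpr hAz), mul_nonneg ha (by nlinarith : (0:ℝ) ≤ 2 - 2*‖z‖^2)]


lemma condA_of_condB (a : ℝ) (p : ℂ → ℂ)
    (hp : DifferentiableOn ℂ p (ball 0 1))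
    (hB : ∀ z ∈ ball (0:ℂ) 1, z ≠ 0 →
      a * (1 + ‖z‖^2) ≤ ((3 - (‖z‖:ℂ)^2) * p z + (1 - (‖z‖:ℂ)^2) * (z * deriv p z)).re)
    {z : ℂ} (hz : z ∈ ball (0:ℂ) 1) : a ≤ (p z).re := by
  have hz1 : ‖z‖ < 1 := by simpa [mem_ball, dist_zero_right] using hz
  have key : ∀ ρ : ℝ, ‖z‖ < ρ → ρ < 1 → a * (1 + ρ^2) ≤ (3 - ρ^2) * (p z).re := by
    intro ρ hρz hρ1
    have hρ0 : 0 < ρ := lt_of_le_of_lt (norm_nonneg z) hρz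
    have hsub : closedBall (0:ℂ) ρ ⊆ ball 0 1 := closedBall_subset_ball hρ1
    set q : ℂ → ℂ := fun w => Complex.exp (-p w) with hq
    have hqdiff : DifferentiableOn ℂ q (closedBall 0 ρ) :=
      ((hp.mono hsub).neg).cexp
    have hqcl : DiffContOnCl ℂ q (ball 0 ρ) := by
      apply DifferentiableOn.diffContOnCl
      rwa [closure_ball (0:ℂ) hρ0.ne']
    -- max of ‖q‖ on the sphere
    obtain ⟨z₁, hz₁s, hz₁max⟩ := (isCompact_sphere (0:ℂ) ρ).exists_isMaxOn
      (NormedSpace.sphere_nonempty.mpr hρ0.le)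
      ((hqdiff.continuousOn.mono sphere_subset_closedBall).norm)
    have hz₁ρ : ‖z₁‖ = ρ := mem_sphere_zero_iff_norm.mp hz₁s
    have hmax : ∀ w ∈ closedBall (0:ℂ) ρ, ‖q w‖ ≤ ‖q z₁‖ := by
      intro w hw
      apply Complex.norm_le_of_forall_mem_frontier_norm_le isBounded_ball hqcl
      · intro y hy
        rw [frontier_ball (0:ℂ) hρ0.ne'] at hy
        exact hz₁max hy
      · rwa [closure_ball (0:ℂ) hρ0.ne']
    have hqnorm : ∀ w : ℂ, ‖q w‖ = Real.exp (-(p w).re) := by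
      intro w
      rw [hq]
      simp [Complex.norm_exp]
    have hmin : ∀ w ∈ closedBall (0:ℂ) ρ, (p z₁).re ≤ (p w).re := by
      intro w hw
      have := hmax w hw
      rw [hqnorm, hqnorm] at this
      have := Real.exp_le_exp.mp this
      linarith
    -- radial derivative at z₁ is ≤ 0
    have hz₁b : z₁ ∈ ball (0:ℂ) 1 := hsub (sphere_subset_closedBall hz₁s)
    set d : ℂ := deriv p z₁ with hd
    have hpz₁ : HasDerivAt p d z₁ := (hp.differentiableAt (isOpen_ball.mem_nhds hz₁b)).hasDerivAt
    have hm : HasDerivAt (fun t : ℝ => ((t:ℝ):ℂ) * z₁) z₁ 1 := by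
      simpa using (Complex.ofRealCLM.hasDerivAt (x := (1:ℝ))).mul_const z₁
    have hcomp : HasDerivAt (fun t : ℝ => p (((t:ℝ):ℂ) * z₁)) (z₁ * d) 1 := by
      have h1 : HasFDerivAt p ((1 : ℂ →L[ℂ] ℂ).smulRight d) (((1:ℝ):ℂ) * z₁) := by
        rw [show (((1:ℝ):ℂ) * z₁) = z₁ by norm_num]
        exact hpz₁.hasFDerivAt
      have h2 := (h1.restrictScalars ℝ).comp_hasDerivAt 1 hm
      exact h2.congr_deriv (by simp [smul_eq_mul])
    have hψ : HasDerivAt (fun t : ℝ => (p (((t:ℝ):ℂ) * z₁)).re) ((z₁ * d).re) 1 :=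
      Complex.reCLM.hasFDerivAt.comp_hasDerivAt 1 hcomp
    have hslope : (z₁ * d).re ≤ 0 := by
      have htend : Tendsto (slope (fun t : ℝ => (p (((t:ℝ):ℂ) * z₁)).re) 1)
          (𝓝[<] 1) (𝓝 ((z₁ * d).re)) :=
        (hasDerivAt_iff_tendsto_slope.mp hψ).mono_left
          (nhdsWithin_mono 1 (fun x hx => ne_of_lt hx))
      apply le_of_tendsto htend
      filter_upwards [Ioo_mem_nhdsLT_of_mem (⟨one_pos, le_refl (1:ℝ)⟩ : (1:ℝ) ∈ Ioc (0:ℝ) 1)]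
        with t ht
      have hmem : ((t:ℝ):ℂ) * z₁ ∈ closedBall (0:ℂ) ρ := by
        simp only [mem_closedBall, dist_zero_right, norm_mul, Complex.norm_real,
          Real.norm_eq_abs, hz₁ρ]
        rw [abs_of_pos ht.1]
        nlinarith [ht.2, hρ0]
      have hnum : 0 ≤ (p (((t:ℝ):ℂ) * z₁)).re - (p z₁).re := by
        have := hmin _ hmem
        linarith
      rw [slope_def_field]
      simp only [Complex.ofReal_one, one_mul]
      exact div_nonpos_iff.mpr (Or.inl ⟨by linarith, by linarith [ht.2]⟩)
    -- apply B at z₁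
    have hz₁ne : z₁ ≠ 0 := by
      intro h; rw [h] at hz₁ρ; simp at hz₁ρ; linarith
    have hBz₁ := hB z₁ hz₁b hz₁ne
    have hre : ((3 - (‖z₁‖:ℂ)^2) * p z₁ + (1 - (‖z₁‖:ℂ)^2) * (z₁ * deriv p z₁)).re
        = (3 - ρ^2) * (p z₁).re + (1 - ρ^2) * (z₁ * d).re := by
      have h1 : ((3:ℂ) - (‖z₁‖:ℂ)^2) = (((3 - ρ^2 : ℝ)) : ℂ) := by rw [hz₁ρ]; push_cast; ring
      have h2 : ((1:ℂ) - (‖z₁‖:ℂ)^2) = (((1 - ρ^2 : ℝ)) : ℂ) := by rw [hz₁ρ]; push_cast; ring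
      rw [h1, h2, add_re, re_ofReal_mul, re_ofReal_mul, hd]
    rw [hre] at hBz₁
    rw [hz₁ρ] at hBz₁
    have hcoef : (0:ℝ) ≤ 1 - ρ^2 := by nlinarith
    have h5 : a * (1 + ρ^2) ≤ (3 - ρ^2) * (p z₁).re := by nlinarith
    have h6 : (p z₁).re ≤ (p z).re := hmin z (by
      simp only [mem_closedBall, dist_zero_right]; linarith)
    nlinarith
  -- limit ρ → 1⁻
  have h1 : Tendsto (fun ρ : ℝ => a * (1 + ρ^2)) (𝓝[<] (1:ℝ)) (𝓝 (a * 2)) := by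
    have : Tendsto (fun ρ : ℝ => a * (1 + ρ^2)) (𝓝 (1:ℝ)) (𝓝 (a * (1 + 1^2))) := by
      apply Continuous.tendsto; continuity
    norm_num at this
    exact this.mono_left nhdsWithin_le_nhds
  have h2 : Tendsto (fun ρ : ℝ => (3 - ρ^2) * (p z).re) (𝓝[<] (1:ℝ)) (𝓝 (2 * (p z).re)) := by
    have : Tendsto (fun ρ : ℝ => (3 - ρ^2) * (p z).re) (𝓝 (1:ℝ)) (𝓝 ((3 - 1^2) * (p z).re)) := by
      apply Continuous.tendsto; continuity
    norm_num at this
    exact this.mono_left nhdsWithin_le_nhds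
  have h3 : a * 2 ≤ 2 * (p z).re := by
    apply le_of_tendsto_of_tendsto h1 h2
    filter_upwards [Ioo_mem_nhdsLT_of_mem (⟨hz1, le_refl (1:ℝ)⟩ : (1:ℝ) ∈ Ioc ‖z‖ 1)] with ρ hρ
    exact key ρ hρ.1 hρ.2
  linarith


lemma slice_transfer {X : Type*} [NormedAddCommGroup X] [NormedSpace ℂ X]
    (f : X → X) (hf : DifferentiableOn ℂ f (ball 0 1)) (hf0 : f 0 = 0)
    {x : X} {φ : X →L[ℂ] ℂ} (hx : x ∈ ball (0:X) 1) (hx0 : x ≠ 0) (hφ : φ ∈ suppFun x) :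
    ∃ p : ℂ → ℂ, DifferentiableOn ℂ p (ball 0 1) ∧
      (∀ ζ : ℂ, ζ ∈ ball (0:ℂ) 1 → ζ ≠ 0 → ∃ y : X, y ∈ ball (0:X) 1 ∧ ∃ χ ∈ suppFun y,
        ‖y‖ = ‖ζ‖ ∧ χ (f y) = (‖ζ‖:ℂ)^2 * p ζ ∧
        χ ((fderiv ℂ f y) y) = (‖ζ‖:ℂ)^2 * (p ζ + ζ * deriv p ζ)) ∧
      φ (f x) = (‖x‖:ℂ)^2 * p ((‖x‖:ℝ):ℂ) ∧
      φ ((fderiv ℂ f x) x) =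
        (‖x‖:ℂ)^2 * (p ((‖x‖:ℝ):ℂ) + ((‖x‖:ℝ):ℂ) * deriv p ((‖x‖:ℝ):ℂ)) := by
  set r : ℝ := ‖x‖ with hrdef
  have hr0 : 0 < r := norm_pos_iff.mpr hx0
  have hr1 : r < 1 := by simpa [mem_ball, dist_zero_right] using hx
  have hrC : ((r:ℝ):ℂ) ≠ 0 := by exact_mod_cast hr0.ne'
  set u : X := (((r⁻¹:ℝ)):ℂ) • x with hu
  set ψ : X →L[ℂ] ℂ := (((r⁻¹:ℝ)):ℂ) • φ with hψ
  have hun : ‖u‖ = 1 := by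
    rw [hu, norm_smul, Complex.norm_real, Real.norm_eq_abs, abs_of_pos (by positivity)]
    field_simp
    exact hrdef.symm
  have hψn : ‖ψ‖ = 1 := by
    rw [hψ, norm_smul (((r⁻¹:ℝ)):ℂ) φ, Complex.norm_real, Real.norm_eq_abs,
      abs_of_pos (by positivity), hφ.2]
    field_simp
    exact hrdef.symm
  have hψu : ψ u = 1 := by
    rw [hψ, hu]
    simp only [ContinuousLinearMap.smul_apply, map_smul, smul_eq_mul]
    rw [hφ.1]
    rw [← hrdef]
    field_simp
    push_cast
    field_simp
  have hmapsb : ∀ ζ : ℂ, ζ ∈ ball (0:ℂ) 1 → ζ • u ∈ ball (0:X) 1 := by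
    intro ζ hζ
    have : ‖ζ‖ < 1 := by simpa [mem_ball, dist_zero_right] using hζ
    simp only [mem_ball, dist_zero_right, norm_smul, hun, mul_one]
    exact this
  set F : ℂ → ℂ := fun ζ => ψ (f (ζ • u)) with hF
  have h1 : DifferentiableOn ℂ (fun ζ : ℂ => f (ζ • u)) (ball 0 1) :=
    hf.comp ((differentiable_id.smul_const u).differentiableOn) (fun ζ hζ => hmapsb ζ hζ)
  have hFdiff : DifferentiableOn ℂ F (ball 0 1) :=
    ψ.differentiable.comp_differentiableOn h1
  have hF0 : F 0 = 0 := by simp [hF, hf0]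
  have hFderiv : ∀ ζ ∈ ball (0:ℂ) 1, HasDerivAt F (ψ ((fderiv ℂ f (ζ • u)) u)) ζ := by
    intro ζ hζ
    have hdf := (hf.differentiableAt (isOpen_ball.mem_nhds (hmapsb ζ hζ))).hasFDerivAt
    have hline : HasDerivAt (fun w : ℂ => w • u) u ζ := by
      simpa using (hasDerivAt_id ζ).smul_const u
    have h2 := hdf.comp_hasDerivAt ζ hline
    exact ψ.hasFDerivAt.comp_hasDerivAt ζ h2
  set p : ℂ → ℂ := dslope F 0 with hp
  have hpdiff : DifferentiableOn ℂ p (ball 0 1) :=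
    (Complex.differentiableOn_dslope (isOpen_ball.mem_nhds (mem_ball_self one_pos))).mpr hFdiff
  have hcz : ∀ ζ : ℂ, (starRingEnd ℂ) ζ * ζ = (‖ζ‖:ℂ)^2 := by
    intro ζ
    rw [mul_comm, Complex.mul_conj, Complex.normSq_eq_norm_sq]
    push_cast
    ring
  have hFp : ∀ ζ : ℂ, F ζ = ζ * p ζ := by
    intro ζ
    rcases eq_or_ne ζ 0 with rfl | hζ0
    · simp [hF0]
    · rw [hp, dslope_of_ne _ hζ0, slope_def_field, hF0]
      field_simp
      ring
  have hderivF : ∀ ζ ∈ ball (0:ℂ) 1, ψ ((fderiv ℂ f (ζ • u)) u) = p ζ + ζ * deriv p ζ := by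
    intro ζ hζ
    have hpd : HasDerivAt p (deriv p ζ) ζ :=
      (hpdiff.differentiableAt (isOpen_ball.mem_nhds hζ)).hasDerivAt
    have h2 : HasDerivAt (fun w => w * p w) (p ζ + ζ * deriv p ζ) ζ := by
      exact ((hasDerivAt_id' ζ).mul hpd).congr_deriv (by simp)
    have h3 : HasDerivAt F (p ζ + ζ * deriv p ζ) ζ := by
      rw [show F = fun w => w * p w from funext hFp]
      exact h2
    exact (hFderiv ζ hζ).unique h3
  refine ⟨p, hpdiff, ?_, ?_, ?_⟩
  · -- general ζ
    intro ζ hζ hζ0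
    refine ⟨ζ • u, hmapsb ζ hζ, (starRingEnd ℂ ζ) • ψ, ?_, ?_, ?_, ?_⟩
    · constructor
      · simp only [ContinuousLinearMap.smul_apply, map_smul, smul_eq_mul, hψu, mul_one]
        rw [norm_smul ζ u, hun, mul_one, mul_comm]
        exact hcz ζ
      · rw [norm_smul ((starRingEnd ℂ) ζ) ψ, hψn, mul_one, RCLike.norm_conj,
          norm_smul ζ u, hun, mul_one]
    · rw [norm_smul ζ u, hun, mul_one]
    · simp only [ContinuousLinearMap.smul_apply, smul_eq_mul]
      rw [show ψ (f (ζ • u)) = F ζ from rfl, hFp ζ, ← mul_assoc, hcz]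
    · have hmap : (fderiv ℂ f (ζ • u)) (ζ • u) = ζ • ((fderiv ℂ f (ζ • u)) u) :=
        (fderiv ℂ f (ζ • u)).map_smul ζ u
      simp only [ContinuousLinearMap.smul_apply, hmap, map_smul, smul_eq_mul]
      rw [hderivF ζ hζ, ← mul_assoc, mul_comm ζ ((starRingEnd ℂ) ζ), hcz]
  · -- φ (f x)
    have hx_eq : ((r:ℝ):ℂ) • u = x := by
      rw [hu, smul_smul]
      rw [show ((r:ℝ):ℂ) * ((r⁻¹:ℝ):ℂ) = 1 by push_cast; field_simp]
      simp
    have hφ_eq : φ = ((r:ℝ):ℂ) • ψ := by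
      rw [hψ, smul_smul]
      rw [show ((r:ℝ):ℂ) * ((r⁻¹:ℝ):ℂ) = 1 by push_cast; field_simp]
      simp
    conv_lhs => rw [← hx_eq, hφ_eq]
    simp only [ContinuousLinearMap.smul_apply, smul_eq_mul]
    rw [show ψ (f (((r:ℝ):ℂ) • u)) = F ((r:ℝ):ℂ) from rfl, hFp]
    ring
  · have hx_eq : ((r:ℝ):ℂ) • u = x := by
      rw [hu, smul_smul]
      rw [show ((r:ℝ):ℂ) * ((r⁻¹:ℝ):ℂ) = 1 by push_cast; field_simp]
      simp
    have hφ_eq : φ = ((r:ℝ):ℂ) • ψ := by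
      rw [hψ, smul_smul]
      rw [show ((r:ℝ):ℂ) * ((r⁻¹:ℝ):ℂ) = 1 by push_cast; field_simp]
      simp
    have hrb : ((r:ℝ):ℂ) ∈ ball (0:ℂ) 1 := by
      simp only [mem_ball, dist_zero_right, Complex.norm_real, Real.norm_eq_abs]
      rw [abs_of_pos hr0]; exact hr1
    have hmap : (fderiv ℂ f x) x = ((r:ℝ):ℂ) • ((fderiv ℂ f x) u) := by
      have h9 := (fderiv ℂ f x).map_smul ((r:ℝ):ℂ) u
      rw [hx_eq] at h9
      exact h9
    conv_lhs => rw [hφ_eq, hmap]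
    simp only [ContinuousLinearMap.smul_apply, map_smul, smul_eq_mul]
    have := hderivF ((r:ℝ):ℂ) hrb
    rw [hx_eq] at this
    rw [this]
    ring

end Aux

/-- Proposition 2.4 (equivalence of (i) and (iv)). -/
theorem stmt_1 {X : Type*} [NormedAddCommGroup X] [NormedSpace ℂ X]
    (a : ℝ) (ha : 0 ≤ a) (f : X → X)
    (hf : DifferentiableOn ℂ f (ball 0 1)) (hf0 : f 0 = 0) :
    (∀ x ∈ ball (0 : X) 1, ∀ φ ∈ suppFun x, a * ‖x‖ ^ 2 ≤ (φ (f x)).re) ↔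
    (∀ x ∈ ball (0 : X) 1, ∀ φ ∈ suppFun x,
      a * ‖x‖ ^ 2 * (1 + ‖x‖ ^ 2) ≤
        (2 * φ (f x) + (1 - (‖x‖ : ℂ) ^ 2) * φ (fderiv ℂ f x x)).re) := by
  constructor
  · intro h x hx φ hφ
    rcases eq_or_ne x 0 with rfl | hx0
    · simp [hf0]
    obtain ⟨p, hpdiff, hgen, hfx, hfdx⟩ := slice_transfer f hf hf0 hx hx0 hφ
    set r : ℝ := ‖x‖ with hrdef
    have hr0 : 0 < r := norm_pos_iff.mpr hx0
    have hr1 : r < 1 := by simpa [mem_ball, dist_zero_right] using hx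
    have hAne : ∀ ζ : ℂ, ζ ∈ ball (0:ℂ) 1 → ζ ≠ 0 → a ≤ (p ζ).re := by
      intro ζ hζ hζ0
      obtain ⟨y, hy, χ, hχ, hyn, hfy, _⟩ := hgen ζ hζ hζ0
      have h2 := h y hy χ hχ
      rw [hfy] at h2
      have hre : ((‖ζ‖:ℂ)^2 * p ζ).re = ‖ζ‖^2 * (p ζ).re := by
        rw [show ((‖ζ‖:ℂ))^2 = ((‖ζ‖^2 : ℝ):ℂ) by push_cast; ring, re_ofReal_mul]
      rw [hre, hyn] at h2
      have hζpos : 0 < ‖ζ‖^2 := by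
        have := norm_pos_iff.mpr hζ0
        positivity
      nlinarith
    have hA : ∀ ζ ∈ ball (0:ℂ) 1, a ≤ (p ζ).re := by
      intro ζ hζ
      rcases eq_or_ne ζ 0 with rfl | hζ0
      · have hcont : ContinuousAt p 0 :=
          (hpdiff.differentiableAt (isOpen_ball.mem_nhds (mem_ball_self one_pos))).continuousAt
        have h1 : Filter.Tendsto (fun t : ℝ => ((t:ℝ):ℂ)) (nhdsWithin (0:ℝ) (Set.Ioi 0)) (nhds (0:ℂ)) := by
          have h0 := (Complex.continuous_ofReal.tendsto 0).mono_left
            (nhdsWithin_le_nhds (s := Set.Ioi (0:ℝ)))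
          simpa using h0
        have htend : Filter.Tendsto (fun t : ℝ => (p ((t:ℝ):ℂ)).re)
            (nhdsWithin (0:ℝ) (Set.Ioi 0)) (nhds ((p 0).re)) :=
          (Complex.continuous_re.tendsto _).comp (hcont.tendsto.comp h1)
        apply ge_of_tendsto htend
        filter_upwards [Ioo_mem_nhdsGT_of_mem (⟨le_refl (0:ℝ), one_pos⟩ : (0:ℝ) ∈ Set.Ico (0:ℝ) 1)]
          with t ht
        apply hAne
        · simp only [mem_ball, dist_zero_right, Complex.norm_real, Real.norm_eq_abs]
          rw [abs_of_pos ht.1]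
          exact ht.2
        · exact_mod_cast ht.1.ne'
      · exact hAne ζ hζ hζ0
    have hrb : ((r:ℝ):ℂ) ∈ ball (0:ℂ) 1 := by
      simp only [mem_ball, dist_zero_right, Complex.norm_real, Real.norm_eq_abs]
      rw [abs_of_pos hr0]
      exact hr1
    have hB := condB_of_condA a ha p hpdiff hA hrb
    have hnr : ‖((r:ℝ):ℂ)‖ = r := by
      rw [Complex.norm_real, Real.norm_eq_abs, abs_of_pos hr0]
    rw [hnr] at hB
    rw [hfx, hfdx]
    have hval : 2 * ((‖x‖:ℂ)^2 * p ((r:ℝ):ℂ)) + (1 - (‖x‖:ℂ)^2) *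
          ((‖x‖:ℂ)^2 * (p ((r:ℝ):ℂ) + ((r:ℝ):ℂ) * deriv p ((r:ℝ):ℂ)))
        = ((r^2 : ℝ):ℂ) * ((3 - ((r:ℝ):ℂ)^2) * p ((r:ℝ):ℂ)
            + (1 - ((r:ℝ):ℂ)^2) * (((r:ℝ):ℂ) * deriv p ((r:ℝ):ℂ))) := by
      rw [← hrdef]
      push_cast
      ring
    rw [hval, re_ofReal_mul]
    have h9 := mul_le_mul_of_nonneg_left hB (sq_nonneg r)
    linarith
  · intro h x hx φ hφ
    rcases eq_or_ne x 0 with rfl | hx0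
    · simp [hf0]
    obtain ⟨p, hpdiff, hgen, hfx, hfdx⟩ := slice_transfer f hf hf0 hx hx0 hφ
    set r : ℝ := ‖x‖ with hrdef
    have hr0 : 0 < r := norm_pos_iff.mpr hx0
    have hr1 : r < 1 := by simpa [mem_ball, dist_zero_right] using hx
    have hBne : ∀ ζ : ℂ, ζ ∈ ball (0:ℂ) 1 → ζ ≠ 0 →
        a * (1 + ‖ζ‖^2) ≤ ((3 - (‖ζ‖:ℂ)^2) * p ζ + (1 - (‖ζ‖:ℂ)^2) * (ζ * deriv p ζ)).re := by
      intro ζ hζ hζ0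
      obtain ⟨y, hy, χ, hχ, hyn, hfy, hfd⟩ := hgen ζ hζ hζ0
      have h2 := h y hy χ hχ
      rw [hfy, hfd, hyn] at h2
      have hval : 2 * ((‖ζ‖:ℂ)^2 * p ζ) + (1 - (‖ζ‖:ℂ)^2) *
            ((‖ζ‖:ℂ)^2 * (p ζ + ζ * deriv p ζ))
          = ((‖ζ‖^2 : ℝ):ℂ) * ((3 - (‖ζ‖:ℂ)^2) * p ζ + (1 - (‖ζ‖:ℂ)^2) * (ζ * deriv p ζ)) := by
        push_cast
        ring
      rw [hval, re_ofReal_mul] at h2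
      have hζpos : 0 < ‖ζ‖^2 := by
        have := norm_pos_iff.mpr hζ0
        positivity
      nlinarith
    have hrb : ((r:ℝ):ℂ) ∈ ball (0:ℂ) 1 := by
      simp only [mem_ball, dist_zero_right, Complex.norm_real, Real.norm_eq_abs]
      rw [abs_of_pos hr0]
      exact hr1
    have hA := condA_of_condB a p hpdiff hBne hrb
    rw [hfx]
    have hre : ((‖x‖:ℂ)^2 * p ((r:ℝ):ℂ)).re = ‖x‖^2 * (p ((r:ℝ):ℂ)).re := by
      rw [show ((‖x‖:ℂ))^2 = ((‖x‖^2 : ℝ):ℂ) by push_cast; ring, re_ofReal_mul]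
    rw [hre, ← hrdef]
    have h9 := mul_le_mul_of_nonneg_left hA (sq_nonneg r)
    linarith
end

section
/- Let h : B → X be holomorphic with h(0) = 0, set A = h'(0), and suppose that for some θ ∈ ℝ and c ≥ 0 one has Re⟨e^{−iθ}h(x), x*⟩ ≤ −c‖x‖² for all x ∈ B and all x* ∈ J(x). Then for every real t with c < t ≤ −K_A(θ), the mapping e^{−iθ}h + t·Id is holomorphically dissipative on the ball of radius r(t) := (t + K_A(θ))/(2c − t + K_A(θ)); that is, for every x ∈ B with ‖x‖ ≤ r(t) and every x* ∈ J(x), Re⟨e^{−iθ}h(x) + t x, x*⟩ ≤ 0. -/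
open Complex Metric

lemma harnack_aux {v : ℂ → ℂ} (hv : DifferentiableOn ℂ v (ball 0 1))
    (hpos : ∀ z ∈ ball (0:ℂ) 1, 0 < (v z).re) {z : ℂ} (hz : z ∈ ball (0:ℂ) 1) :
    (v 0).re * ((1 - ‖z‖) / (1 + ‖z‖)) ≤ (v z).re := by
  set a : ℂ := v 0 with ha
  have h0 : (0:ℂ) ∈ ball (0:ℂ) 1 := by simp
  have hα : 0 < a.re := hpos 0 h0
  set F : ℂ → ℂ := fun w => (v w - a) / (v w + (starRingEnd ℂ) a) with hF
  have hden : ∀ w ∈ ball (0:ℂ) 1, v w + (starRingEnd ℂ) a ≠ 0 := by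
    intro w hw hcontra
    have : (v w + (starRingEnd ℂ) a).re = 0 := by rw [hcontra]; simp
    rw [Complex.add_re, Complex.conj_re] at this
    have := hpos w hw
    linarith
  have hFd : DifferentiableOn ℂ F (ball 0 1) :=
    ((hv.sub (differentiableOn_const a)).div
      (hv.add (differentiableOn_const _)) hden)
  have hF0 : F 0 = 0 := by simp [hF, ← ha]
  have hmaps : Set.MapsTo F (ball (0:ℂ) 1) (ball (F 0) 1) := by
    intro w hw
    rw [hF0, mem_ball, dist_zero_right]
    have hs := hpos w hw
    have h1 : ‖v w - a‖ < ‖v w + (starRingEnd ℂ) a‖ := by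
      have hsq : ‖v w - a‖ ^ 2 < ‖v w + (starRingEnd ℂ) a‖ ^ 2 := by
        rw [Complex.sq_norm, Complex.sq_norm, Complex.normSq_apply, Complex.normSq_apply]
        simp only [Complex.sub_re, Complex.sub_im, Complex.add_re, Complex.add_im,
          Complex.conj_re, Complex.conj_im]
        nlinarith [mul_pos hα hs]
      exact lt_of_pow_lt_pow_left₀ 2 (norm_nonneg _) hsq
    simp only [hF, norm_div]
    rw [div_lt_one (lt_of_le_of_lt (norm_nonneg _) h1)]
    exact h1
  have hsch := Complex.dist_le_div_mul_dist_of_mapsTo_ball hFd (hmaps.mono_right ball_subset_closedBall) hz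
  rw [hF0, dist_zero_right, dist_zero_right, div_self one_ne_zero, one_mul] at hsch
  have hdz := hden z hz
  simp only [hF, norm_div] at hsch
  rw [div_le_iff₀ (norm_pos_iff.mpr hdz)] at hsch
  have hs := hpos z hz
  have hr1 : ‖z‖ < 1 := by simpa using hz
  have hr0 : 0 ≤ ‖z‖ := norm_nonneg _
  set r := ‖z‖ with hrr
  have hsq : ‖v z - a‖ ^ 2 ≤ r ^ 2 * ‖v z + (starRingEnd ℂ) a‖ ^ 2 := by
    calc ‖v z - a‖ ^ 2 ≤ (r * ‖v z + (starRingEnd ℂ) a‖) ^ 2 := by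
          apply pow_le_pow_left₀ (norm_nonneg _) (by linarith [hsch])
      _ = r ^ 2 * ‖v z + (starRingEnd ℂ) a‖ ^ 2 := by ring
  have e1 : ‖v z - a‖ ^ 2 = ((v z).re - a.re)^2 + ((v z).im - a.im)^2 := by
    rw [Complex.sq_norm, Complex.normSq_apply]
    simp only [Complex.sub_re, Complex.sub_im]; ring
  have e2 : ‖v z + (starRingEnd ℂ) a‖ ^ 2
      = ((v z).re + a.re)^2 + ((v z).im - a.im)^2 := by
    rw [Complex.sq_norm, Complex.normSq_apply]
    simp only [Complex.add_re, Complex.add_im, Complex.conj_re, Complex.conj_im]; ring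
  rw [e1, e2] at hsq
  rw [← mul_div_assoc, div_le_iff₀ (by linarith : (0:ℝ) < 1 + r)]
  have hd2 : (0:ℝ) ≤ (1 - r^2) * ((v z).im - a.im)^2 :=
    mul_nonneg (by nlinarith) (sq_nonneg _)
  have key : ((v z).re - a.re - r*((v z).re + a.re)) *
      ((v z).re - a.re + r*((v z).re + a.re)) ≤ 0 := by nlinarith [hsq, hd2]
  nlinarith [key, mul_nonneg hr0 (by linarith : (0:ℝ) ≤ (v z).re + a.re), hs, hα]


lemma harnack_aux2 {v : ℂ → ℂ} (hv : DifferentiableOn ℂ v (ball 0 1))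
    (hpos : ∀ z ∈ ball (0:ℂ) 1, 0 ≤ (v z).re) {z : ℂ} (hz : z ∈ ball (0:ℂ) 1) :
    (v 0).re * ((1 - ‖z‖) / (1 + ‖z‖)) ≤ (v z).re := by
  have hr1 : ‖z‖ < 1 := by simpa using hz
  have hr0 : 0 ≤ ‖z‖ := norm_nonneg _
  have hlam0 : 0 ≤ (1 - ‖z‖) / (1 + ‖z‖) :=
    div_nonneg (by linarith) (by linarith)
  have hlam1 : (1 - ‖z‖) / (1 + ‖z‖) ≤ 1 := by
    rw [div_le_one (by linarith)]; linarith
  refine le_of_forall_pos_le_add fun ε hε => ?_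
  have key := harnack_aux (v := fun w => v w + (ε:ℂ))
    (hv.add (differentiableOn_const _))
    (fun w hw => by
      simp only [Complex.add_re, Complex.ofReal_re]
      linarith [hpos w hw]) hz
  simp only [Complex.add_re, Complex.ofReal_re] at key
  nlinarith [mul_nonneg hε.le hlam0]


set_option maxHeartbeats 1000000 in
/-- The mapping `e^{-iθ}h + t·Id` is holomorphically dissipative on the ball
of radius `r(t) = (t + K_A(θ))/(2c - t + K_A(θ))`, for `c < t ≤ -K_A(θ)`. -/
theorem stmt_5 {X : Type*} [NormedAddCommGroup X] [NormedSpace ℂ X] [Nontrivial X]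
    (h : X → X) (hh : DifferentiableOn ℂ h (ball 0 1)) (h0 : h 0 = 0)
    (A : X →L[ℂ] X) (hA : A = fderiv ℂ h 0)
    (θ c : ℝ) (hc : 0 ≤ c)
    (hdiss : ∀ x ∈ ball (0 : X) 1, ∀ φ ∈ suppFun x,
      (Complex.exp (-(θ : ℂ) * Complex.I) * φ (h x)).re ≤ -c * ‖x‖ ^ 2)
    (t : ℝ) (ht : c < t) (ht' : t ≤ -KA A θ) :
    ∀ x ∈ ball (0 : X) 1, ‖x‖ ≤ (t + KA A θ) / (2 * c - t + KA A θ) →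
      ∀ φ ∈ suppFun x,
        (Complex.exp (-(θ : ℂ) * Complex.I) * φ (h x) + (t : ℂ) * φ x).re ≤ 0 := by
  intro x hx hxr φ hφ
  set E : ℂ := Complex.exp (-(θ : ℂ) * Complex.I) with hE
  have hEabs : ‖E‖ = 1 := by
    rw [hE, Complex.norm_exp]; simp
  set K : ℝ := KA A θ with hK
  rcases eq_or_ne x 0 with rfl | hx0
  · simp [h0]
  -- basic quantities
  have hrx0 : 0 < ‖x‖ := norm_pos_iff.mpr hx0
  have hrx1 : ‖x‖ < 1 := by simpa using hx
  set rx : ℝ := ‖x‖ with hrx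
  have hrxC : ((rx:ℂ)) ≠ 0 := by exact_mod_cast (ne_of_gt (by exact_mod_cast hrx0))
  set u : X := ((rx:ℂ)⁻¹) • x with hu_def
  have hu : ‖u‖ = 1 := by
    rw [hu_def]
    rw [norm_smul]
    simp only [norm_inv, Complex.norm_real, Real.norm_eq_abs, abs_of_pos hrx0, ← hrx]
    exact inv_mul_cancel₀ (ne_of_gt hrx0)
  set ψ : X →L[ℂ] ℂ := ((rx:ℂ)⁻¹) • φ with hψ_def
  have hφx : φ x = (rx:ℂ)^2 := hφ.1
  have hψ_apply : ∀ w : X, ψ w = (rx:ℂ)⁻¹ * φ w := fun w => rfl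
  have hψu : ψ u = 1 := by
    rw [hψ_apply, hu_def, map_smul, smul_eq_mul, hφx]
    field_simp
  have hψnorm : ‖ψ‖ = 1 := by
    rw [hψ_def]
    rw [norm_smul ((rx:ℂ)⁻¹) φ]
    simp [Complex.norm_real, Real.norm_eq_abs, abs_of_pos hrx0, hφ.2, ← hrx,
      inv_mul_cancel₀ (ne_of_gt hrx0)]
  have hψsupp : ψ ∈ suppFun u := by
    constructor
    · rw [hψu, hu]; norm_num
    · rw [hψnorm, hu]
  -- the one-variable function
  set g : ℂ → ℂ := fun z => E * ψ (h (z • u)) with hg_def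
  have hmapu : Set.MapsTo (fun z : ℂ => z • u) (ball (0:ℂ) 1) (ball (0:X) 1) := by
    intro z hz
    rw [mem_ball, dist_zero_right, norm_smul, hu, mul_one]
    simpa using hz
  have hg_diff : DifferentiableOn ℂ g (ball 0 1) := by
    have d1 : DifferentiableOn ℂ (fun z : ℂ => z • u) (ball 0 1) :=
      (differentiable_id.smul_const u).differentiableOn
    exact ((ψ.differentiable.comp_differentiableOn (hh.comp d1 hmapu))).const_mul E
  have hg0 : g 0 = 0 := by simp [hg_def, h0]
  set W : ℂ → ℂ := dslope g 0 with hW_def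
  have hW_diff : DifferentiableOn ℂ W (ball 0 1) :=
    (differentiableOn_dslope (ball_mem_nhds 0 one_pos)).mpr hg_diff
  -- K is an upper bound related facts
  have hKbdd : BddAbove {s : ℝ | ∃ y : X, ‖y‖ = 1 ∧ ∃ φ' ∈ suppFun y,
      s = (Complex.exp (-(θ : ℂ) * Complex.I) * φ' (A y)).re} := by
    refine ⟨‖A‖, fun s hs => ?_⟩
    obtain ⟨y, hy, φ', hφ', rfl⟩ := hs
    calc (Complex.exp (-(θ : ℂ) * Complex.I) * φ' (A y)).re
        ≤ ‖Complex.exp (-(θ : ℂ) * Complex.I) * φ' (A y)‖ := Complex.re_le_norm _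
      _ = ‖φ' (A y)‖ := by rw [norm_mul, ← hE, hEabs, one_mul]
      _ ≤ ‖φ'‖ * ‖A y‖ := φ'.le_opNorm _
      _ ≤ 1 * (‖A‖ * ‖y‖) := by
          apply mul_le_mul (le_of_eq (by rw [hφ'.2, hy])) (A.le_opNorm y)
            (norm_nonneg _) zero_le_one
      _ = ‖A‖ := by rw [hy, one_mul, mul_one]
  -- derivative of g at 0
  have hgd : HasDerivAt g (E * ψ (A u)) 0 := by
    have h1 : HasDerivAt (fun z : ℂ => z • u) u 0 := by
      simpa using (hasDerivAt_id (0:ℂ)).smul_const u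
    have h2 : HasFDerivAt h (fderiv ℂ h 0) ((0:ℂ) • u) := by
      rw [zero_smul]
      exact (hh.differentiableAt (ball_mem_nhds 0 one_pos)).hasFDerivAt
    have h3 : HasDerivAt (fun z : ℂ => h (z • u)) (fderiv ℂ h 0 u) 0 :=
      h2.comp_hasDerivAt 0 h1
    have h4 : HasDerivAt (fun z : ℂ => ψ (h (z • u))) (ψ (fderiv ℂ h 0 u)) 0 :=
      (ψ.hasFDerivAt).comp_hasDerivAt 0 h3
    have h5 := h4.const_mul E
    rw [← hA] at h5
    exact h5
  have hW0K : (W 0).re ≤ K := by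
    have : W 0 = E * ψ (A u) := by rw [hW_def, dslope_same, hgd.deriv]
    rw [this, hK, KA]
    exact le_csSup hKbdd ⟨u, hu, ψ, hψsupp, rfl⟩
  have hKt : K ≤ -t := by linarith [ht']
  -- Re W ≤ -c on the ball
  have hWle : ∀ z ∈ ball (0:ℂ) 1, (W z).re ≤ -c := by
    intro z hz
    rcases eq_or_ne z 0 with rfl | hz0
    · have : (W 0).re ≤ -t := le_trans hW0K hKt
      linarith
    · have hWz : W z = g z / z := by
        rw [hW_def, dslope_of_ne _ hz0, slope_def_field, hg0, sub_zero, sub_zero]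
      set φz : X →L[ℂ] ℂ := (starRingEnd ℂ z) • ψ with hφz_def
      have hφz_apply : ∀ w : X, φz w = (starRingEnd ℂ z) * ψ w := fun w => rfl
      have hzu_norm : ‖z • u‖ = ‖z‖ := by
        rw [norm_smul, hu, mul_one]
      have habsz0 : ‖z‖ ≠ 0 := by simpa using hz0
      have hφzsupp : φz ∈ suppFun (z • u) := by
        constructor
        · rw [hφz_apply, map_smul, smul_eq_mul, hψu, mul_one, hzu_norm]
          have e1 : ((‖z‖ : ℝ):ℂ)^2 = ((Complex.normSq z : ℝ) : ℂ) := by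
            rw [← Complex.ofReal_pow, Complex.normSq_eq_norm_sq]
          rw [e1, ← Complex.mul_conj]
          ring
        · rw [hφz_def]
          rw [norm_smul ((starRingEnd ℂ) z) ψ]
          rw [hψnorm, mul_one, hzu_norm]
          simp
      have hzu_ball : z • u ∈ ball (0:X) 1 := hmapu hz
      have hd := hdiss (z • u) hzu_ball φz hφzsupp
      rw [hzu_norm] at hd
      have hgd2 : E * φz (h (z • u)) = (starRingEnd ℂ z) * g z := by
        rw [hφz_apply, hg_def]; ring
      rw [hgd2] at hd
      have hnsq : (0:ℝ) < Complex.normSq z := Complex.normSq_pos.mpr hz0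
      have e : g z / z = (((Complex.normSq z)⁻¹ : ℝ) : ℂ) * ((starRingEnd ℂ z) * g z) := by
        rw [div_eq_mul_inv, Complex.inv_def, Complex.ofReal_inv]
        ring
      rw [hWz, e, Complex.re_ofReal_mul]
      have : ((starRingEnd ℂ z) * g z).re ≤ -c * Complex.normSq z := by
        rw [Complex.normSq_eq_norm_sq]; exact hd
      calc (Complex.normSq z)⁻¹ * ((starRingEnd ℂ z) * g z).re
          ≤ (Complex.normSq z)⁻¹ * (-c * Complex.normSq z) := by
            apply mul_le_mul_of_nonneg_left this (inv_nonneg.mpr hnsq.le)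
        _ = -c := by field_simp
  -- apply Harnack to v = -c - W
  set v : ℂ → ℂ := fun z => -(c:ℂ) - W z with hv_def
  have hv_re : ∀ z, (v z).re = -c - (W z).re := by
    intro z; simp [hv_def]
  have hv_diff : DifferentiableOn ℂ v (ball 0 1) :=
    (differentiableOn_const _).sub hW_diff
  have hv_pos : ∀ z ∈ ball (0:ℂ) 1, 0 ≤ (v z).re := by
    intro z hz; rw [hv_re]; linarith [hWle z hz]
  have hrxC_ball : ((rx:ℂ)) ∈ ball (0:ℂ) 1 := by
    rw [mem_ball, dist_zero_right, Complex.norm_real, Real.norm_eq_abs,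
      abs_of_pos hrx0]
    exact hrx1
  have habs_rx : ‖(rx:ℂ)‖ = rx := by
    rw [Complex.norm_real, Real.norm_eq_abs, abs_of_pos hrx0]
  have harn := harnack_aux2 hv_diff hv_pos hrxC_ball
  rw [habs_rx, hv_re, hv_re] at harn
  -- the radius condition
  have hden : 2 * c - t + K < 0 := by linarith
  have hxr' : t + K ≤ rx * (2 * c - t + K) := by
    exact (le_div_iff_of_neg hden).mp hxr
  have hlamK : t - c ≤ (1 - rx) / (1 + rx) * (-c - K) := by
    rw [div_mul_eq_mul_div, le_div_iff₀ (by linarith : (0:ℝ) < 1 + rx)]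
    nlinarith [hxr']
  have hlam0 : 0 ≤ (1 - rx) / (1 + rx) := by
    apply div_nonneg <;> linarith
  -- conclude Re W rx ≤ -t
  have hmono : (1 - rx) / (1 + rx) * (-c - K) ≤ (1 - rx) / (1 + rx) * (-c - (W 0).re) :=
    mul_le_mul_of_nonneg_left (by linarith [hW0K]) hlam0
  have hWrx : (W ((rx:ℂ))).re ≤ -t := by
    have hcomm : (-c - (W 0).re) * ((1 - rx) / (1 + rx))
        = (1 - rx) / (1 + rx) * (-c - (W 0).re) := mul_comm _ _
    linarith [harn, hlamK, hmono, hcomm]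
  -- translate back
  have hrxu : ((rx:ℂ)) • u = x := by
    rw [hu_def, smul_smul, mul_inv_cancel₀ hrxC, one_smul]
  have hWval : E * φ (h x) = ((rx:ℂ))^2 * W ((rx:ℂ)) := by
    have hWz : W ((rx:ℂ)) = g ((rx:ℂ)) / ((rx:ℂ)) := by
      rw [hW_def, dslope_of_ne _ hrxC, slope_def_field, hg0, sub_zero, sub_zero]
    rw [hWz, hg_def]
    simp only [hrxu]
    rw [hψ_apply]
    field_simp
  have hre : (E * φ (h x)).re = rx^2 * (W ((rx:ℂ))).re := by
    rw [hWval]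
    have : ((rx:ℂ))^2 = ((rx^2 : ℝ) : ℂ) := by push_cast; ring
    rw [this, Complex.re_ofReal_mul]
  have htφ : ((t:ℂ) * φ x).re = t * rx^2 := by
    rw [hφx]
    have : (t:ℂ) * ((rx:ℂ))^2 = (((t * rx^2 : ℝ)) : ℂ) := by push_cast; ring
    rw [this, Complex.ofReal_re]
  rw [Complex.add_re, hre, htφ]
  nlinarith [hWrx, sq_nonneg rx]
end

section
/- Let a ≥ 0 and let f ∈ N_a satisfy Assumption A. Set α(λ) := min( 3/(1 − λK), 1/(1 + λa) ). Then for every λ > 0 and every x ∈ B, ‖G_λ(x)‖ ≤ α(λ)·‖x‖. Consequently, sup_{x ∈ B} ‖G_λ(x)‖ ≤ α(λ) → 0 as λ → ∞, i.e., the resolvent family {G_λ}_{λ>0} converges to zero uniformly on B as λ → ∞. -/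
open Complex Metric

/-- `G` is the (non-linear) resolvent of `f` with parameter `lam`: a holomorphic
self-mapping of the unit ball such that `w = G x` is the unique solution in the ball
of `w + lam f(w) = x`. -/
def IsResolvent {X : Type*} [NormedAddCommGroup X] [NormedSpace ℂ X]
    (f : X → X) (lam : ℝ) (G : X → X) : Prop :=
  DifferentiableOn ℂ G (ball 0 1) ∧
    ∀ x ∈ ball (0 : X) 1, G x ∈ ball (0 : X) 1 ∧ G x + (lam : ℂ) • f (G x) = x ∧
      ∀ w ∈ ball (0 : X) 1, w + (lam : ℂ) • f w = x → w = G x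

open Topology Filter

lemma harnack_aux_s8 {q : ℂ → ℂ} (hq : DifferentiableOn ℂ q (ball 0 1))
    (hre : ∀ z ∈ ball (0:ℂ) 1, 0 < (q z).re) {t : ℝ} (ht0 : 0 ≤ t) (ht1 : t < 1) :
    (q 0).re * ((1 - t) / (1 + t)) ≤ (q (t : ℂ)).re := by
  have h0mem : (0:ℂ) ∈ ball (0:ℂ) 1 := by simp
  have htmem : (t:ℂ) ∈ ball (0:ℂ) 1 := by
    rw [mem_ball_zero_iff, Complex.norm_real, Real.norm_eq_abs]
    rwa [_root_.abs_of_nonneg ht0]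
  set d : ℂ → ℂ := fun z => q z + (starRingEnd ℂ) (q 0) with hd_def
  have hdre : ∀ z ∈ ball (0:ℂ) 1, 0 < (d z).re := by
    intro z hz
    have : (d z).re = (q z).re + (q 0).re := by simp [hd_def, Complex.add_re, Complex.conj_re]
    rw [this]
    have := hre z hz; have := hre 0 h0mem; linarith
  have hd0 : ∀ z ∈ ball (0:ℂ) 1, d z ≠ 0 := by
    intro z hz h
    have := hdre z hz
    rw [h] at this; simp at this
  set w : ℂ → ℂ := fun z => (q z - q 0) / d z with hw_def
  have hwdiff : DifferentiableOn ℂ w (ball 0 1) :=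
    (hq.sub_const _).div (hq.add_const _) hd0
  have hw0 : w 0 = 0 := by simp [hw_def]
  have hnum_lt : ∀ z ∈ ball (0:ℂ) 1,
      ‖q z - q 0‖ < ‖d z‖ := by
    intro z hz
    have h1 := hre z hz
    have h2 := hre 0 h0mem
    have hns : Complex.normSq (q z - q 0) < Complex.normSq (d z) := by
      simp only [hd_def, Complex.normSq_apply, Complex.sub_re, Complex.sub_im,
        Complex.add_re, Complex.add_im, Complex.conj_re, Complex.conj_im]
      nlinarith [h1, h2]
    rw [Complex.norm_def, Complex.norm_def]
    exact Real.sqrt_lt_sqrt (Complex.normSq_nonneg _) hns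
  have hmaps : Set.MapsTo w (ball (0:ℂ) 1) (ball (0:ℂ) 1) := by
    intro z hz
    rw [mem_ball_zero_iff, hw_def]
    simp only
    rw [norm_div, div_lt_one (by
      have := hnum_lt z hz
      have := norm_nonneg (q z - q 0)
      linarith)]
    exact hnum_lt z hz
  -- Schwarz lemma
  have hsch : ‖w (t:ℂ)‖ ≤ t := by
    have := Complex.norm_le_norm_of_mapsTo_ball_self hwdiff (hmaps.mono_right ball_subset_closedBall) hw0
      (z := (t:ℂ)) (by rwa [Complex.norm_real, Real.norm_eq_abs, _root_.abs_of_nonneg ht0])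
    rwa [Complex.norm_real, Real.norm_eq_abs, _root_.abs_of_nonneg ht0] at this
  set ω : ℂ := w (t:ℂ) with hω_def
  -- the algebraic identity
  have hE : q (t:ℂ) * (1 - ω) = q 0 + ω * (starRingEnd ℂ) (q 0) := by
    rw [hω_def, hw_def]
    simp only
    field_simp [hd0 _ htmem]
    ring
  have hRe := congrArg Complex.re hE
  have hIm := congrArg Complex.im hE
  simp only [Complex.mul_re, Complex.mul_im, Complex.sub_re, Complex.sub_im,
    Complex.add_re, Complex.add_im, Complex.one_re, Complex.one_im,
    Complex.conj_re, Complex.conj_im] at hRe hIm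
  set A1 := (q (t:ℂ)).re; set A2 := (q (t:ℂ)).im
  set u := ω.re; set v := ω.im
  set c := (q 0).re; set e := (q 0).im
  have hc : 0 < c := hre 0 h0mem
  have huv : u^2 + v^2 ≤ t^2 := by
    have h := hsch
    have : Complex.normSq ω ≤ t^2 := by
      rw [← Complex.sq_norm]
      nlinarith [norm_nonneg ω]
    simpa [Complex.normSq_apply, pow_two] using this
  have hu_abs : |u| ≤ t := (Complex.abs_re_le_norm ω).trans hsch
  have hu1 : u < 1 := lt_of_le_of_lt ((le_abs_self u).trans hu_abs) ht1
  have hut : -t ≤ u := (abs_le.mp hu_abs).1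
  have key : A1 * ((1-u)^2 + v^2) = c * (1 - (u^2 + v^2)) := by
    linear_combination (1-u) * hRe - v * hIm
  have hD : 0 < (1-u)^2 + v^2 := by nlinarith [sq_nonneg v, sq_nonneg (1-u)]
  have h1 : (1-t) * ((1-u)^2 + v^2) ≤ (1 - (u^2+v^2)) * (1+t) := by
    nlinarith [mul_nonneg (by linarith : (0:ℝ) ≤ 1 - t) (by linarith : (0:ℝ) ≤ t + u), huv]
  have h2 : c * (1-t) * ((1-u)^2 + v^2) ≤ A1 * (1+t) * ((1-u)^2 + v^2) := by
    calc c * (1-t) * ((1-u)^2 + v^2) ≤ c * ((1 - (u^2+v^2)) * (1+t)) := by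
          nlinarith [mul_le_mul_of_nonneg_left h1 hc.le]
      _ = A1 * (1+t) * ((1-u)^2 + v^2) := by linear_combination (-(1+t)) * key
  have h3 : c * (1-t) ≤ A1 * (1+t) := le_of_mul_le_mul_right h2 hD
  rw [← mul_div_assoc, div_le_iff₀ (by linarith : (0:ℝ) < 1 + t)]
  linarith

lemma harnack {p : ℂ → ℂ} {a : ℝ} (hp : DifferentiableOn ℂ p (ball 0 1))
    (hre : ∀ z ∈ ball (0:ℂ) 1, a ≤ (p z).re) {t : ℝ} (ht0 : 0 ≤ t) (ht1 : t < 1) :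
    a + ((p 0).re - a) * ((1 - t) / (1 + t)) ≤ (p (t : ℂ)).re := by
  have hs0 : 0 ≤ (1 - t) / (1 + t) := div_nonneg (by linarith) (by linarith)
  have hs1 : (1 - t) / (1 + t) ≤ 1 := by
    rw [div_le_one (by linarith)]; linarith
  refine le_of_forall_pos_le_add fun ε hε => ?_
  set q : ℂ → ℂ := fun z => p z - (a:ℂ) + (ε:ℂ) with hq_def
  have hq : DifferentiableOn ℂ q (ball 0 1) := (hp.sub_const _).add_const _
  have hqre : ∀ z ∈ ball (0:ℂ) 1, 0 < (q z).re := by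
    intro z hz
    have := hre z hz
    simp only [hq_def, Complex.add_re, Complex.sub_re, Complex.ofReal_re]
    linarith
  have h := harnack_aux_s8 hq hqre ht0 ht1
  have e0 : (q 0).re = (p 0).re - a + ε := by
    simp [hq_def, Complex.add_re, Complex.sub_re]
  have et : (q (t:ℂ)).re = (p (t:ℂ)).re - a + ε := by
    simp [hq_def, Complex.add_re, Complex.sub_re]
  rw [e0, et] at h
  nlinarith [mul_le_mul_of_nonneg_left hs1 hε.le]

lemma arith {r t b c : ℝ} (hr0 : 0 < r) (hr1 : r < 1) (ht1 : t < 1) (hb : 1 ≤ b)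
    (hc : 0 ≤ c) (h : r * b + c * r * ((1 - r) / (1 + r)) ≤ t) : r * (b + c) ≤ 3 * t := by
  have h1r : (0:ℝ) < 1 + r := by linarith
  have hmain : r * b * (1 + r) + c * r * (1 - r) ≤ t * (1 + r) := by
    have h2 := mul_le_mul_of_nonneg_right h h1r.le
    have e : c * r * ((1 - r) / (1 + r)) * (1 + r) = c * r * (1 - r) := by
      field_simp
    nlinarith [h2]
  rcases le_or_gt r (1/2) with hhalf | hhalf
  · nlinarith [hmain, mul_nonneg (mul_nonneg hc hr0.le) (by linarith : (0:ℝ) ≤ 2 - 4*r),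
      mul_pos hr0 (lt_of_lt_of_le one_pos hb), mul_pos (mul_pos hr0 (lt_of_lt_of_le one_pos hb)) h1r]
  · have hcr : c * r * (1 - r) ≤ (1 - r) * (1 + r) := by
      nlinarith [hmain, mul_nonneg (mul_nonneg hr0.le h1r.le) (by linarith : (0:ℝ) ≤ b - 1),
        mul_nonneg h1r.le (by linarith : (0:ℝ) ≤ 1 - t)]
    have h1mr : (0:ℝ) < 1 - r := by linarith
    have hcr2 : c * r ≤ 1 + r := by
      have := mul_le_mul_of_nonneg_right (le_refl (c*r)) h1mr.le
      nlinarith [hcr]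
    nlinarith [hmain, mul_le_mul_of_nonneg_right hcr2 (by linarith : (0:ℝ) ≤ 4*r - 2),
      mul_nonneg (mul_nonneg (by linarith : (0:ℝ) ≤ b - 1) hr0.le) h1r.le]

/-- Corollary 4.2: `‖G_λ(x)‖ ≤ α(λ)‖x‖` with `α(λ) = min(3/(1-λK), 1/(1+λa))`,
and the resolvent family converges to zero uniformly on the ball as `λ → ∞`. -/
theorem stmt_8 {X : Type*} [NormedAddCommGroup X] [NormedSpace ℂ X] [Nontrivial X]
    (a : ℝ) (ha : 0 ≤ a) (f : X → X) (hf : IsNa a f)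
    (K : ℝ) (hKdef : K = KA (fderiv ℂ f 0) Real.pi) (hK : K < 0) (hKa : K + a ≤ 0)
    (G : ℝ → X → X) (hG : ∀ lam, 0 < lam → IsResolvent f lam (G lam)) :
    (∀ lam, 0 < lam → ∀ x ∈ ball (0 : X) 1,
      ‖G lam x‖ ≤ min (3 / (1 - lam * K)) (1 / (1 + lam * a)) * ‖x‖) ∧
    Filter.Tendsto (fun lam : ℝ => min (3 / (1 - lam * K)) (1 / (1 + lam * a)))
      Filter.atTop (nhds 0) := by
  obtain ⟨hfd, hf0, hfa⟩ := hf
  constructor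
  · intro lam hlam x hx
    obtain ⟨-, hGp⟩ := hG lam hlam
    obtain ⟨hwball, hweq, -⟩ := hGp x hx
    set w := G lam x with hw_def
    have hK' : (0:ℝ) < 1 - lam*K := by nlinarith
    have ha' : (0:ℝ) < 1 + lam*a := by nlinarith
    by_cases hw0 : w = 0
    · rw [hw0, norm_zero]
      exact mul_nonneg (le_min (div_nonneg (by norm_num) hK'.le)
        (div_nonneg (by norm_num) ha'.le)) (norm_nonneg x)
    have hr0 : 0 < ‖w‖ := norm_pos_iff.mpr hw0
    have hr1 : ‖w‖ < 1 := mem_ball_zero_iff.mp hwball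
    set r := ‖w‖ with hr_def
    obtain ⟨ψ, hψn, hψw⟩ := exists_dual_vector ℂ w (norm_ne_zero_iff.mpr hw0)
    have hrC : (r:ℂ) ≠ 0 := by exact_mod_cast hr0.ne'
    set u : X := (r:ℂ)⁻¹ • w with hu_def
    have hun : ‖u‖ = 1 := by
      rw [hu_def, norm_smul, norm_inv, Complex.norm_real, Real.norm_eq_abs,
        abs_of_pos hr0]
      field_simp
      rfl
    have hru : (r:ℂ) • u = w := by
      rw [hu_def, smul_smul, mul_inv_cancel₀ hrC, one_smul]
    have hψu : ψ u = 1 := by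
      rw [hu_def, map_smul, hψw, smul_eq_mul]
      exact inv_mul_cancel₀ hrC
    set A := fderiv ℂ f 0 with hA_def
    set g : ℂ → ℂ := fun z => ψ (f (z • u)) with hg_def
    have hsm : Set.MapsTo (fun z : ℂ => z • u) (ball (0:ℂ) 1) (ball (0:X) 1) := by
      intro z hz
      rw [mem_ball_zero_iff, norm_smul, hun, mul_one]
      exact mem_ball_zero_iff.mp hz
    have hgd : DifferentiableOn ℂ g (ball 0 1) :=
      ψ.differentiable.comp_differentiableOn
        (hfd.comp ((differentiable_id.smul_const u).differentiableOn) hsm)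
    have hg0 : g 0 = 0 := by simp [hg_def, hf0]
    set p := dslope g 0 with hp_def
    have hpd : DifferentiableOn ℂ p (ball 0 1) :=
      (differentiableOn_dslope (ball_mem_nhds _ one_pos)).mpr hgd
    have hgz : ∀ z : ℂ, z ≠ 0 → g z = z * p z := by
      intro z hz0
      rw [hp_def, dslope_of_ne g hz0, slope_def_field, hg0]
      field_simp
      ring
    have hpre' : ∀ z ∈ ball (0:ℂ) 1, z ≠ 0 → a ≤ (p z).re := by
      intro z hz hz0
      set φ : X →L[ℂ] ℂ := (starRingEnd ℂ z) • ψ with hφ_def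
      have hzu : z • u ∈ ball (0:X) 1 := hsm hz
      have hφm : φ ∈ suppFun (z • u) := by
        constructor
        · rw [hφ_def]
          rw [ContinuousLinearMap.smul_apply, map_smul, smul_eq_mul, smul_eq_mul,
            hψu, mul_one, norm_smul, hun, mul_one]
          rw [mul_comm]
          rw [Complex.mul_conj]
          push_cast [← Complex.sq_norm]
          ring
        · rw [hφ_def, norm_smul ((starRingEnd ℂ) z) ψ, hψn, mul_one, RCLike.norm_conj,
            norm_smul z u, hun, mul_one]
      have hineq := hfa (z • u) hzu φ hφm
      have hφf : (φ (f (z • u))).re = Complex.normSq z * (p z).re := by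
        rw [hφ_def, ContinuousLinearMap.smul_apply, smul_eq_mul]
        have : ψ (f (z • u)) = g z := rfl
        rw [this, hgz z hz0, ← mul_assoc, mul_comm ((starRingEnd ℂ) z) z,
          Complex.mul_conj, Complex.re_ofReal_mul]
      rw [hφf] at hineq
      have hnz : 0 < Complex.normSq z := Complex.normSq_pos.mpr hz0
      have hnrm : ‖z • u‖^2 = Complex.normSq z := by
        rw [norm_smul, hun, mul_one, Complex.sq_norm]
      rw [hnrm] at hineq
      nlinarith [hineq, hnz]
    have hpre : ∀ z ∈ ball (0:ℂ) 1, a ≤ (p z).re := by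
      intro z hz
      rcases eq_or_ne z 0 with rfl | hz0
      · have hcont : ContinuousAt p 0 :=
          continuousAt_dslope_same.mpr (hgd.differentiableAt (ball_mem_nhds _ one_pos))
        have htend : Filter.Tendsto (fun z => (p z).re) (𝓝[≠] (0:ℂ)) (𝓝 ((p 0).re)) :=
          ((Complex.continuous_re.continuousAt.comp hcont).tendsto).mono_left
            nhdsWithin_le_nhds
        refine ge_of_tendsto htend ?_
        have hball : ball (0:ℂ) 1 ∈ 𝓝[≠] (0:ℂ) :=
          nhdsWithin_le_nhds (ball_mem_nhds _ one_pos)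
        filter_upwards [hball, self_mem_nhdsWithin] with z hz1 hz2
        exact hpre' z hz1 hz2
      · exact hpre' z hz hz0
    -- p 0 = ψ (A u)
    have hL : HasDerivAt (fun z : ℂ => z • u) u 0 := by
      simpa using (hasDerivAt_id (0:ℂ)).smul_const u
    have hfA : DifferentiableAt ℂ f 0 := hfd.differentiableAt (ball_mem_nhds _ one_pos)
    have hcomp : HasDerivAt (fun z : ℂ => f (z • u)) (A u) 0 := by
      have h0 : (fun z : ℂ => z • u) 0 = 0 := by simp
      have := (h0 ▸ hfA.hasFDerivAt).comp_hasDerivAt 0 hL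
      simpa [hA_def, Function.comp_def] using this
    have hgder : HasDerivAt g (ψ (A u)) 0 := ψ.hasFDerivAt.comp_hasDerivAt 0 hcomp
    have hp0 : p 0 = ψ (A u) := by rw [hp_def, dslope_same]; exact hgder.deriv
    -- -(p 0).re ≤ K
    have hKset : -(p 0).re ≤ K := by
      rw [hKdef, KA]
      apply le_csSup
      · refine ⟨‖(fderiv ℂ f 0 : X →L[ℂ] X)‖, ?_⟩
        rintro s ⟨y, hy, φ, ⟨hφ1, hφ2⟩, rfl⟩
        have h1 : ‖(Complex.exp (-(Real.pi:ℂ) * Complex.I))‖ = 1 := by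
          have he : (-(Real.pi:ℂ) * Complex.I) = ((-Real.pi : ℝ):ℂ) * Complex.I := by
            push_cast; ring
          rw [he, Complex.norm_exp_ofReal_mul_I]
        calc (Complex.exp (-(Real.pi:ℂ) * Complex.I) * φ ((fderiv ℂ f 0) y)).re
            ≤ ‖Complex.exp (-(Real.pi:ℂ) * Complex.I) * φ ((fderiv ℂ f 0) y)‖ :=
              Complex.re_le_norm _
          _ = ‖Complex.exp (-(Real.pi:ℂ) * Complex.I)‖ *
              ‖φ ((fderiv ℂ f 0) y)‖ := norm_mul _ _
          _ = ‖φ ((fderiv ℂ f 0) y)‖ := by rw [h1, one_mul]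
          _ ≤ ‖φ‖ * ‖(fderiv ℂ f 0) y‖ := φ.le_opNorm _
          _ ≤ ‖y‖ * (‖(fderiv ℂ f 0 : X →L[ℂ] X)‖ * ‖y‖) := by
              rw [hφ2]
              exact mul_le_mul_of_nonneg_left ((fderiv ℂ f 0).le_opNorm y) (norm_nonneg y)
          _ = ‖(fderiv ℂ f 0 : X →L[ℂ] X)‖ := by rw [hy]; ring
      · refine ⟨u, hun, ψ, ⟨?_, ?_⟩, ?_⟩
        · rw [hψu, hun]; norm_num
        · rw [hψn, hun]
        · have hexp : Complex.exp (-(Real.pi:ℂ) * Complex.I) = -1 := by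
            rw [neg_mul, Complex.exp_neg, Complex.exp_pi_mul_I]
            norm_num
          rw [hexp, hp0, hA_def]
          simp
    -- Harnack estimate at t = r
    have hH := harnack hpd hpre hr0.le hr1
    have hs0 : (0:ℝ) ≤ (1 - r) / (1 + r) := div_nonneg (by linarith) (by linarith)
    have hmono : a + (-K - a) * ((1 - r) / (1 + r)) ≤ (p (r:ℂ)).re := by
      have h1 : (-K - a) * ((1 - r) / (1 + r)) ≤ ((p 0).re - a) * ((1 - r) / (1 + r)) :=
        mul_le_mul_of_nonneg_right (by linarith [hKset]) hs0
      linarith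
    -- resolvent inequality
    have hgr : ψ (f w) = (r:ℂ) * p (r:ℂ) := by
      have h1 : g (r:ℂ) = (r:ℂ) * p (r:ℂ) := hgz _ hrC
      rw [← h1, hg_def]
      simp only [hru]
    have hψw' : ψ w = (r:ℂ) := hψw
    have hψx : (ψ x).re = r + lam * (r * (p (r:ℂ)).re) := by
      rw [← hweq, map_add, map_smul, smul_eq_mul, hgr, hψw']
      rw [← mul_assoc, ← Complex.ofReal_mul]
      rw [Complex.add_re, Complex.ofReal_re, Complex.re_ofReal_mul]
      ring
    have hbound : (ψ x).re ≤ ‖x‖ := by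
      calc (ψ x).re ≤ ‖ψ x‖ := Complex.re_le_norm _
        _ = ‖ψ x‖ := rfl
        _ ≤ ‖ψ‖ * ‖x‖ := ψ.le_opNorm x
        _ = ‖x‖ := by rw [hψn, one_mul]
    have hfin : r * (1 + lam * a) + (lam * (-K - a)) * r * ((1 - r) / (1 + r)) ≤ ‖x‖ := by
      have h2 : lam * (r * (a + (-K - a) * ((1 - r) / (1 + r)))) ≤
          lam * (r * (p (r:ℂ)).re) :=
        mul_le_mul_of_nonneg_left (mul_le_mul_of_nonneg_left hmono hr0.le) hlam.le
      have h3 : r + lam * (r * (p (r:ℂ)).re) ≤ ‖x‖ := by rw [← hψx]; exact hbound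
      have e : r * (1 + lam * a) + (lam * (-K - a)) * r * ((1 - r) / (1 + r)) =
          r + lam * (r * (a + (-K - a) * ((1 - r) / (1 + r)))) := by ring
      rw [e]
      linarith
    clear_value p g u A w r
    clear hψw hψw' hψu hru hun hu_def hgz hgr hψx hbound hsm hgd hg0 hpd hpre hpre' hmono hH hgder hp0 hcomp hfA hL hKset
    have hx1 : ‖x‖ < 1 := mem_ball_zero_iff.mp hx
    have hb1 : (1:ℝ) ≤ 1 + lam * a := by nlinarith
    have hc0 : (0:ℝ) ≤ lam * (-K - a) := mul_nonneg hlam.le (by linarith)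
    have harith : r * ((1 + lam * a) + lam * (-K - a)) ≤ 3 * ‖x‖ :=
      arith hr0 hr1 hx1 hb1 hc0 (by linarith [hfin])
    have hb2 : r * (1 + lam * a) ≤ ‖x‖ := by
      linarith [hfin, mul_nonneg (mul_nonneg hc0 hr0.le) hs0]
    rw [min_mul_of_nonneg _ _ (norm_nonneg x)]
    refine le_min ?_ ?_
    · rw [div_mul_eq_mul_div, le_div_iff₀ hK']
      have he : 1 - lam * K = (1 + lam * a) + lam * (-K - a) := by ring
      calc r * (1 - lam * K) = r * ((1 + lam * a) + lam * (-K - a)) := by rw [he]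
        _ ≤ 3 * ‖x‖ := harith
    · rw [div_mul_eq_mul_div, le_div_iff₀ ha', one_mul]
      exact hb2
  · -- Tendsto part
    have hKpos : (0:ℝ) < -K := neg_pos.mpr hK
    have h1 : Filter.Tendsto (fun lam : ℝ => 1 - lam * K) Filter.atTop Filter.atTop := by
      have h2 : Filter.Tendsto (fun lam : ℝ => lam * -K) Filter.atTop Filter.atTop :=
        Filter.Tendsto.atTop_mul_const hKpos Filter.tendsto_id
      have h3 := Filter.tendsto_atTop_add_const_left Filter.atTop (1:ℝ) h2
      simpa [mul_neg, sub_eq_add_neg] using h3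
    have h4 : Filter.Tendsto (fun lam : ℝ => 3 / (1 - lam * K)) Filter.atTop (nhds 0) :=
      Filter.Tendsto.div_atTop tendsto_const_nhds h1
    apply squeeze_zero' ?_ ?_ h4
    · filter_upwards [Filter.eventually_ge_atTop (0:ℝ)] with lam hlam
      have : (0:ℝ) < 1 - lam * K := by nlinarith
      have : (0:ℝ) < 1 + lam * a := by nlinarith
      exact le_min (by positivity) (by positivity)
    · exact Filter.Eventually.of_forall fun lam => min_le_left _ _
end

section
/- Let a ≥ 0, K < 0 and K₁ ≥ a be real constants. Define α(λ) := min( 3/(1 − λK), 1/(1 + λa) ) for λ > 0, and on the set D := {λ > 0 : α(λ) < 1} define Ψ(λ) := (2λ(K₁ − a)/(1 − λK)) · Σ_{n=2}^∞ n^{(2n−1)/(n−1)} · α(λ)^{n−1} (the series converges since α(λ) < 1). Then Ψ is decreasing on D (λ₁ ≤ λ₂ in D implies Ψ(λ₁) ≥ Ψ(λ₂)) and Ψ(λ) → 0 as λ → ∞. -/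
open Filter


noncomputable def myc (m : ℕ) : ℝ :=
  ((m : ℝ) + 2) ^ ((2 * ((m : ℝ) + 2) - 1) / (((m : ℝ) + 2) - 1))

lemma myc_pos (m : ℕ) : 0 < myc m := by
  unfold myc
  positivity

lemma myc_le_cube (m : ℕ) : myc m ≤ ((m : ℝ) + 2) ^ (3 : ℕ) := by
  have hm : (0:ℝ) ≤ (m:ℝ) := Nat.cast_nonneg m
  unfold myc
  rw [← Real.rpow_natCast ((m:ℝ)+2) 3]
  apply Real.rpow_le_rpow_of_exponent_le (by linarith)
  have h1 : (0:ℝ) < ((m:ℝ)+2) - 1 := by linarith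
  rw [div_le_iff₀ h1]
  push_cast
  nlinarith

lemma myc_mono (m : ℕ) : myc m ≤ myc (m + 1) := by
  have hm : (0:ℝ) ≤ (m:ℝ) := Nat.cast_nonneg m
  set x : ℝ := (m:ℝ) + 2 with hxdef
  have hx0 : (0:ℝ) < x := by simp only [hxdef]; linarith
  set N : ℕ := 2*m^2 + 7*m + 5 with hNdef
  have hNc : ((N:ℝ)) = 2*(m:ℝ)^2 + 7*(m:ℝ) + 5 := by simp only [hNdef]; push_cast; ring
  have hinv : x * (1/x) = 1 := by field_simp
  have key : x ^ (N+1) ≤ (x+1) ^ N := by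
    have h1x : (0:ℝ) ≤ 1/x := by positivity
    have hb : 1 + (N:ℝ) * (1/x) ≤ (1 + 1/x)^N := one_add_mul_le_pow (by linarith) N
    have hxx : x ≤ 1 + (N:ℝ) * (1/x) := by nlinarith [hinv, hNc, hm, hx0]
    calc x ^ (N+1) = x^N * x := by ring
      _ ≤ x^N * (1 + (N:ℝ) * (1/x)) := mul_le_mul_of_nonneg_left hxx (by positivity)
      _ ≤ x^N * (1 + 1/x)^N := mul_le_mul_of_nonneg_left hb (by positivity)
      _ = (x * (1 + 1/x))^N := (mul_pow _ _ _).symm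
      _ = (x+1)^N := by rw [mul_add, hinv, mul_one]
  have hD : (0:ℝ) < ((m:ℝ)+1) * ((m:ℝ)+2) := by positivity
  have e1 : myc m = (x ^ (N+1)) ^ (1 / (((m:ℝ)+1) * ((m:ℝ)+2)) : ℝ) := by
    unfold myc
    rw [← Real.rpow_natCast x (N+1), ← Real.rpow_mul hx0.le]
    congr 1
    have h1 : ((m:ℝ)+2) - 1 ≠ 0 := by linarith
    push_cast
    field_simp
    rw [hNc]; ring
  have e2 : myc (m+1) = ((x + 1) ^ N) ^ (1 / (((m:ℝ)+1) * ((m:ℝ)+2)) : ℝ) := by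
    unfold myc
    have hx1 : (0:ℝ) ≤ x + 1 := by linarith
    rw [← Real.rpow_natCast (x+1) N, ← Real.rpow_mul hx1]
    have hb : (((m+1:ℕ)):ℝ) + 2 = x + 1 := by push_cast [hxdef]; ring
    rw [hb]
    congr 1
    have h1 : (x + 1) - 1 ≠ 0 := by simp only [hxdef]; push_cast; intro h; nlinarith
    push_cast [hxdef]
    field_simp
    rw [hNc]
    have h2 : (2:ℝ) + (m:ℝ) ≠ 0 := by positivity
    linear_combination (2*(m:ℝ)^2+7*m+5) * mul_inv_cancel₀ h2
  rw [e1, e2]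
  exact Real.rpow_le_rpow (by positivity) key (by positivity)

lemma cube_summable {x : ℝ} (hx : |x| < 1) :
    Summable (fun m : ℕ => ((m : ℝ) + 2) ^ (3 : ℕ) * x ^ m) := by
  have hn : ‖x‖ < 1 := by rwa [Real.norm_eq_abs]
  have h3 := summable_pow_mul_geometric_of_norm_lt_one (R := ℝ) 3 hn
  have h2 := summable_pow_mul_geometric_of_norm_lt_one (R := ℝ) 2 hn
  have h1 := summable_pow_mul_geometric_of_norm_lt_one (R := ℝ) 1 hn
  have h0 := summable_geometric_of_norm_lt_one hn
  have hs := (h3.add ((h2.mul_left 6).add ((h1.mul_left 12).add (h0.mul_left 8))))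
  apply hs.congr
  intro m
  push_cast
  ring

noncomputable def myd : ℕ → ℝ
  | 0 => myc 0
  | (m+1) => myc (m+1) - myc m

lemma myd_nonneg (m : ℕ) : 0 ≤ myd m := by
  cases m with
  | zero => exact (myc_pos 0).le
  | succ k => simpa [myd] using myc_mono k

lemma myd_le_cube (m : ℕ) : myd m ≤ ((m : ℝ) + 2) ^ (3 : ℕ) := by
  cases m with
  | zero => simpa [myd] using myc_le_cube 0
  | succ k =>
      have := myc_le_cube (k+1)
      have hp := myc_pos k
      simp only [myd]
      push_cast at this ⊢
      linarith

lemma mycx_summable {x : ℝ} (h0 : 0 ≤ x) (hx : x < 1) :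
    Summable (fun m : ℕ => myc m * x ^ (m + 1)) := by
  apply Summable.of_nonneg_of_le
    (fun m => mul_nonneg (myc_pos m).le (by positivity))
    (fun m => ?_) (cube_summable (by rw [abs_of_nonneg h0]; exact hx))
  exact mul_le_mul (myc_le_cube m)
    (pow_le_pow_of_le_one h0 hx.le (Nat.le_succ m)) (by positivity) (by positivity)

lemma mydx_summable {x : ℝ} (h0 : 0 ≤ x) (hx : x < 1) :
    Summable (fun m : ℕ => myd m * x ^ m) := by
  apply Summable.of_nonneg_of_le
    (fun m => mul_nonneg (myd_nonneg m) (by positivity))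
    (fun m => ?_) (cube_summable (by rw [abs_of_nonneg h0]; exact hx))
  exact mul_le_mul_of_nonneg_right (myd_le_cube m) (by positivity)

lemma TV_identity {x : ℝ} (h0 : 0 ≤ x) (hx : x < 1) :
    (1 - x) * ∑' m : ℕ, myc m * x ^ (m + 1) = x * ∑' m : ℕ, myd m * x ^ m := by
  have hsT := mycx_summable h0 hx
  have hsV := mydx_summable h0 hx
  have hsV' : Summable (fun m : ℕ => myd m * x ^ (m + 1)) :=
    (hsV.mul_left x).congr (fun m => by ring)
  have hsT1 : Summable (fun m : ℕ => myc (m + 1) * x ^ (m + 2)) := by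
    have := (summable_nat_add_iff 1).2 hsT
    exact this.congr (fun m => by ring_nf)
  have hsT2 : Summable (fun m : ℕ => myc m * x ^ (m + 2)) :=
    (hsT.mul_left x).congr (fun m => by ring)
  have eV : x * ∑' m : ℕ, myd m * x ^ m = ∑' m : ℕ, myd m * x ^ (m + 1) := by
    rw [← tsum_mul_left]; exact tsum_congr (fun m => by ring)
  have eT : x * ∑' m : ℕ, myc m * x ^ (m + 1) = ∑' m : ℕ, myc m * x ^ (m + 2) := by
    rw [← tsum_mul_left]; exact tsum_congr (fun m => by ring)
  have split : ∑' m : ℕ, myc m * x ^ (m + 1)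
      = myc 0 * x + ∑' m : ℕ, myc (m + 1) * x ^ (m + 2) := by
    rw [Summable.tsum_eq_zero_add hsT]
    norm_num
  have splitV : ∑' m : ℕ, myd m * x ^ (m + 1)
      = myc 0 * x + ∑' m : ℕ, (myc (m + 1) - myc m) * x ^ (m + 2) := by
    rw [Summable.tsum_eq_zero_add hsV']
    simp only [myd]
    norm_num
  have hsub : ∑' m : ℕ, (myc (m + 1) - myc m) * x ^ (m + 2)
      = (∑' m : ℕ, myc (m + 1) * x ^ (m + 2)) - ∑' m : ℕ, myc m * x ^ (m + 2) := by
    rw [← Summable.tsum_sub hsT1 hsT2]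
    exact tsum_congr (fun m => by ring)
  rw [sub_mul, one_mul, eT, eV, splitV, hsub]
  linarith [split]

lemma ratio_mono {t X : ℝ} (ht : t ≤ X) (hX : X < 1) : t / (1 - t) ≤ X / (1 - X) := by
  rw [div_le_div_iff₀ (by linarith) (by linarith)]
  nlinarith

/-- Lemma 5.2: the auxiliary function
`Ψ(λ) = (2λ(K₁-a)/(1-λK)) · Σ_{n≥2} n^{(2n-1)/(n-1)} α(λ)^{n-1}`
is decreasing on `{λ > 0 : α(λ) < 1}` and tends to `0` as `λ → ∞`. -/
theorem stmt_14 (a K K₁ : ℝ) (ha : 0 ≤ a) (hK : K < 0) (hK₁ : a ≤ K₁)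
    (α Ψ : ℝ → ℝ)
    (hα : ∀ lam : ℝ, α lam = min (3 / (1 - lam * K)) (1 / (1 + lam * a)))
    (hΨ : ∀ lam : ℝ, Ψ lam = (2 * lam * (K₁ - a) / (1 - lam * K)) *
      ∑' m : ℕ, ((m : ℝ) + 2) ^ ((2 * ((m : ℝ) + 2) - 1) / (((m : ℝ) + 2) - 1)) *
        (α lam) ^ (m + 1)) :
    (∀ lam₁ : ℝ, 0 < lam₁ → α lam₁ < 1 → ∀ lam₂ : ℝ, 0 < lam₂ → α lam₂ < 1 →
      lam₁ ≤ lam₂ → Ψ lam₂ ≤ Ψ lam₁) ∧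
    Tendsto Ψ atTop (nhds 0) := by
  have hKpos : 0 < -K := by linarith
  -- basic facts about α on positive lam
  have hu : ∀ lam : ℝ, 0 < lam → 0 < 1 - lam * K := by
    intro lam hl; nlinarith
  have hb : ∀ lam : ℝ, 0 < lam → 0 < 1 + lam * a := by
    intro lam hl; nlinarith
  have hαpos : ∀ lam : ℝ, 0 < lam → 0 < α lam := by
    intro lam hl; rw [hα]
    exact lt_min (div_pos (by norm_num) (hu lam hl)) (div_pos (by norm_num) (hb lam hl))
  have hαleA : ∀ lam : ℝ, 0 < lam → α lam ≤ 3 / (1 - lam * K) := by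
    intro lam _; rw [hα]; exact min_le_left _ _
  have hΨ' : ∀ lam : ℝ, Ψ lam = (2 * lam * (K₁ - a) / (1 - lam * K)) *
      ∑' m : ℕ, myc m * (α lam) ^ (m + 1) := hΨ
  -- rewrite of Ψ on the domain D
  have hrw : ∀ lam : ℝ, 0 < lam → α lam < 1 →
      Ψ lam = (2 * (K₁ - a)) * ((lam * α lam / ((1 - lam * K) * (1 - α lam))) *
        ∑' m : ℕ, myd m * (α lam) ^ m) := by
    intro lam hl hless
    have hx0 : 0 < α lam := hαpos lam hl
    have hid := TV_identity hx0.le hless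
    have h1x : (1 : ℝ) - α lam ≠ 0 := by linarith
    have hT : (∑' m : ℕ, myc m * (α lam) ^ (m + 1))
        = α lam * (∑' m : ℕ, myd m * (α lam) ^ m) / (1 - α lam) := by
      rw [eq_div_iff h1x]; linarith [hid]
    rw [hΨ' lam, hT]
    have hune : (1 : ℝ) - lam * K ≠ 0 := (hu lam hl).ne'
    field_simp
  constructor
  · -- monotonicity
    intro lam₁ h1 ha1 lam₂ h2 ha2 h12
    have hu1 := hu lam₁ h1
    have hu2 := hu lam₂ h2
    have hb1 := hb lam₁ h1
    have hb2 := hb lam₂ h2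
    have hx1 : 0 < α lam₁ := hαpos lam₁ h1
    have hx2 : 0 < α lam₂ := hαpos lam₂ h2
    have huu : 1 - lam₁ * K ≤ 1 - lam₂ * K := by nlinarith
    have hbb : 1 + lam₁ * a ≤ 1 + lam₂ * a := by nlinarith
    have hα21 : α lam₂ ≤ α lam₁ := by
      rw [hα, hα]
      exact min_le_min (div_le_div_of_nonneg_left (by norm_num) hu1 huu)
        (div_le_div_of_nonneg_left (by norm_num) hb1 hbb)
    -- V monotone
    have hVmono : (∑' m : ℕ, myd m * (α lam₂) ^ m) ≤ ∑' m : ℕ, myd m * (α lam₁) ^ m := by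
      refine Summable.tsum_le_tsum (fun m => ?_) (mydx_summable hx2.le ha2) (mydx_summable hx1.le ha1)
      exact mul_le_mul_of_nonneg_left (pow_le_pow_left₀ hx2.le hα21 m) (myd_nonneg m)
    have hVnn : 0 ≤ ∑' m : ℕ, myd m * (α lam₂) ^ m :=
      tsum_nonneg (fun m => mul_nonneg (myd_nonneg m) (pow_nonneg hx2.le m))
    -- h monotone
    have hhmono : lam₂ * α lam₂ / ((1 - lam₂ * K) * (1 - α lam₂)) ≤
        lam₁ * α lam₁ / ((1 - lam₁ * K) * (1 - α lam₁)) := by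
      have hstep : ∀ X : ℝ, α lam₂ ≤ X → X < 1 →
          lam₂ * α lam₂ / ((1 - lam₂ * K) * (1 - α lam₂)) ≤
          lam₂ * X / ((1 - lam₂ * K) * (1 - X)) := by
        intro X hle hX1
        have h := ratio_mono hle hX1
        calc lam₂ * α lam₂ / ((1 - lam₂ * K) * (1 - α lam₂))
            = (lam₂ / (1 - lam₂ * K)) * (α lam₂ / (1 - α lam₂)) :=
              (div_mul_div_comm _ _ _ _).symm
          _ ≤ (lam₂ / (1 - lam₂ * K)) * (X / (1 - X)) :=
              mul_le_mul_of_nonneg_left h (div_nonneg h2.le hu2.le)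
          _ = lam₂ * X / ((1 - lam₂ * K) * (1 - X)) := div_mul_div_comm _ _ _ _
      rcases min_cases (3 / (1 - lam₁ * K)) (1 / (1 + lam₁ * a)) with ⟨hmin, _⟩ | ⟨hmin, _⟩
      · -- branch A is active at lam₁
        have hx1A : α lam₁ = 3 / (1 - lam₁ * K) := by rw [hα]; exact hmin
        have hu13 : 3 < 1 - lam₁ * K := by
          have := ha1; rw [hx1A] at this
          rwa [div_lt_one hu1] at this
        have hu23 : 3 < 1 - lam₂ * K := lt_of_lt_of_le hu13 huu
        have hA2lt : 3 / (1 - lam₂ * K) < 1 := by rw [div_lt_one hu2]; linarith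
        have hle2 : α lam₂ ≤ 3 / (1 - lam₂ * K) := hαleA lam₂ h2
        refine le_trans (hstep _ hle2 hA2lt) ?_
        rw [hx1A]
        have eA : ∀ lam : ℝ, 0 < 1 - lam * K → 3 < 1 - lam * K →
            lam * (3 / (1 - lam * K)) / ((1 - lam * K) * (1 - 3 / (1 - lam * K)))
            = 3 * lam / ((1 - lam * K) * ((1 - lam * K) - 3)) := by
          intro lam hup h3
          have hfr : 3 / (1 - lam * K) < 1 := by rw [div_lt_one hup]; linarith
          have hd1 : (0:ℝ) < (1 - lam * K) * (1 - 3 / (1 - lam * K)) :=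
            mul_pos hup (by linarith)
          have hd2 : (0:ℝ) < (1 - lam * K) * ((1 - lam * K) - 3) :=
            mul_pos hup (by linarith)
          rw [div_eq_div_iff hd1.ne' hd2.ne']
          field_simp
        rw [eA lam₁ hu1 hu13, eA lam₂ hu2 hu23]
        rw [div_le_div_iff₀ (mul_pos hu2 (by linarith)) (mul_pos hu1 (by linarith))]
        have hpos2 : (0:ℝ) ≤ 2 + lam₁ * lam₂ * K^2 := by
          nlinarith [mul_nonneg (mul_pos h1 h2).le (sq_nonneg K)]
        nlinarith [mul_nonneg (sub_nonneg.2 h12) hpos2]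
      · -- branch B is active at lam₁
        have hx1B : α lam₁ = 1 / (1 + lam₁ * a) := by rw [hα]; exact hmin
        have hla : 0 < lam₁ * a := by
          have := ha1; rw [hx1B] at this
          rw [div_lt_one hb1] at this; linarith
        have hane : a ≠ 0 := by
          intro h0; rw [h0, mul_zero] at hla; exact lt_irrefl 0 hla
        have hapos : 0 < a := lt_of_le_of_ne ha (Ne.symm hane)
        have hla2 : 0 < lam₂ * a := mul_pos h2 hapos
        have hB2lt : 1 / (1 + lam₂ * a) < 1 := by
          rw [div_lt_one hb2]; linarith
        have hle2 : α lam₂ ≤ 1 / (1 + lam₂ * a) := by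
          rw [hα]; exact min_le_right _ _
        refine le_trans (hstep _ hle2 hB2lt) ?_
        rw [hx1B]
        have eB : ∀ lam : ℝ, 0 < lam → 0 < 1 + lam * a → 0 < 1 - lam * K →
            lam * (1 / (1 + lam * a)) / ((1 - lam * K) * (1 - 1 / (1 + lam * a)))
            = 1 / ((1 - lam * K) * a) := by
          intro lam hlp hbp hup
          have hla' : 0 < lam * a := mul_pos hlp hapos
          have hfr : 1 / (1 + lam * a) < 1 := by rw [div_lt_one hbp]; linarith
          have hd1 : (0:ℝ) < (1 - lam * K) * (1 - 1 / (1 + lam * a)) :=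
            mul_pos hup (by linarith)
          have hd2 : (0:ℝ) < (1 - lam * K) * a := mul_pos hup hapos
          rw [div_eq_div_iff hd1.ne' hd2.ne']
          field_simp
          ring
        rw [eB lam₁ h1 hb1 hu1, eB lam₂ h2 hb2 hu2]
        apply one_div_le_one_div_of_le (by positivity)
        exact mul_le_mul_of_nonneg_right huu hapos.le
    -- combine
    rw [hrw lam₁ h1 ha1, hrw lam₂ h2 ha2]
    have : (lam₂ * α lam₂ / ((1 - lam₂ * K) * (1 - α lam₂))) *
        (∑' m : ℕ, myd m * (α lam₂) ^ m) ≤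
        (lam₁ * α lam₁ / ((1 - lam₁ * K) * (1 - α lam₁))) *
        (∑' m : ℕ, myd m * (α lam₁) ^ m) :=
      mul_le_mul hhmono hVmono hVnn (div_nonneg (mul_nonneg h1.le hx1.le)
        (mul_nonneg hu1.le (by linarith)))
    have hC : 0 ≤ 2 * (K₁ - a) := by linarith
    exact mul_le_mul_of_nonneg_left this hC
  · -- tendsto
    set C₀ : ℝ := ∑' m : ℕ, ((m : ℝ) + 2) ^ (3 : ℕ) * (1/2 : ℝ) ^ m with hC₀def
    have hC₀s : Summable (fun m : ℕ => ((m : ℝ) + 2) ^ (3 : ℕ) * (1/2 : ℝ) ^ m) :=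
      cube_summable (x := 1/2) (by rw [abs_of_pos (by norm_num : (0:ℝ) < 1/2)]; norm_num)
    have hC₀nn : 0 ≤ C₀ := tsum_nonneg (fun m => by positivity)
    have h6 : (0:ℝ) ≤ 6 * (K₁ - a) * C₀ := by nlinarith
    set M : ℝ := 6 * (K₁ - a) * C₀ / (-K) with hMdef
    have htend : Tendsto (fun lam : ℝ => M / (1 - lam * K)) atTop (nhds 0) := by
      apply Tendsto.div_atTop tendsto_const_nhds
      have h1 : Tendsto (fun lam : ℝ => lam * (-K)) atTop atTop :=
        Tendsto.atTop_mul_const hKpos tendsto_id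
      have h2 := tendsto_atTop_add_const_left atTop (1:ℝ) h1
      exact h2.congr (fun lam => by ring)
    refine tendsto_of_tendsto_of_tendsto_of_le_of_le' tendsto_const_nhds htend ?_ ?_
    · filter_upwards [eventually_gt_atTop (0:ℝ)] with lam hl
      rw [hΨ' lam]
      exact mul_nonneg
        (div_nonneg (mul_nonneg (mul_nonneg (by norm_num) hl.le) (by linarith)) (hu lam hl).le)
        (tsum_nonneg (fun m => mul_nonneg (myc_pos m).le (pow_nonneg (hαpos lam hl).le _)))
    · filter_upwards [eventually_gt_atTop (0:ℝ), eventually_ge_atTop (5/(-K))] with lam hl hge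
      have hupos := hu lam hl
      have hu6 : (6:ℝ) ≤ 1 - lam * K := by
        rw [div_le_iff₀ hKpos] at hge
        nlinarith
      have hx0 := hαpos lam hl
      have hαhalf : α lam ≤ 1/2 := by
        refine le_trans (hαleA lam hl) ?_
        rw [div_le_div_iff₀ hupos (by norm_num)]
        linarith
      have hTle : (∑' m : ℕ, myc m * (α lam) ^ (m+1)) ≤ α lam * C₀ := by
        have hterm : ∀ m : ℕ, myc m * (α lam) ^ (m+1)
            ≤ α lam * (((m : ℝ) + 2) ^ (3 : ℕ) * (1/2 : ℝ) ^ m) := by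
          intro m
          have hp : α lam ^ (m+1) ≤ α lam * (1/2)^m := by
            rw [pow_succ]
            calc α lam ^ m * α lam ≤ (1/2 : ℝ)^m * α lam :=
              mul_le_mul_of_nonneg_right (pow_le_pow_left₀ hx0.le hαhalf m) hx0.le
              _ = α lam * (1/2)^m := mul_comm _ _
          calc myc m * (α lam) ^ (m+1)
              ≤ ((m : ℝ) + 2) ^ (3 : ℕ) * (α lam) ^ (m+1) :=
                mul_le_mul_of_nonneg_right (myc_le_cube m) (pow_nonneg hx0.le _)
            _ ≤ ((m : ℝ) + 2) ^ (3 : ℕ) * (α lam * (1/2)^m) :=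
                mul_le_mul_of_nonneg_left hp (by positivity)
            _ = α lam * (((m : ℝ) + 2) ^ (3 : ℕ) * (1/2 : ℝ) ^ m) := by ring
        have := Summable.tsum_le_tsum hterm (mycx_summable hx0.le (by linarith)) (hC₀s.mul_left (α lam))
        rwa [tsum_mul_left] at this
      rw [hΨ' lam]
      have hprefnn : 0 ≤ 2 * lam * (K₁ - a) / (1 - lam * K) :=
        div_nonneg (mul_nonneg (mul_nonneg (by norm_num) hl.le) (by linarith)) hupos.le
      have hαA := hαleA lam hl
      have hkey : lam / (1 - lam * K) ≤ 1 / (-K) := by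
        rw [div_le_div_iff₀ hupos hKpos]
        nlinarith
      calc (2 * lam * (K₁ - a) / (1 - lam * K)) * ∑' m : ℕ, myc m * (α lam) ^ (m+1)
          ≤ (2 * lam * (K₁ - a) / (1 - lam * K)) * (α lam * C₀) :=
            mul_le_mul_of_nonneg_left hTle hprefnn
        _ ≤ (2 * lam * (K₁ - a) / (1 - lam * K)) * ((3 / (1 - lam * K)) * C₀) := by
            apply mul_le_mul_of_nonneg_left (mul_le_mul_of_nonneg_right hαA hC₀nn) hprefnn
        _ = (6 * (K₁ - a) * C₀ / (1 - lam * K)) * (lam / (1 - lam * K)) := by ring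
        _ ≤ (6 * (K₁ - a) * C₀ / (1 - lam * K)) * (1 / (-K)) :=
            mul_le_mul_of_nonneg_left hkey (div_nonneg h6 hupos.le)
        _ = M / (1 - lam * K) := by rw [hMdef]; ring
end
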